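/- arXiv:0806.1837 — 5 statements merged into one kernel-verified Lean document; each statement's English description precedes it below -/
import Mathlib

section
/- Let S > 0 and 0 < T < S. Let f : [0,S] → ℝ be a function of bounded variation on [0,S] and let g : [0,S] → ℝ be continuous. Then lim_{ε→0⁺} (1/ε) ∫_0^T (f(t+ε) − f(t))·(g(t+ε) − g(t)) dt = 0. -/
open MeasureTheory Filter Set

/-- If `f` has bounded variation on `[0,S]` and `g` is continuous on `[0,S]`, then for
`0 < T < S` the joint quadratic variation
`(1/ε) ∫_0^T (f(t+ε) − f(t))(g(t+ε) − g(t)) dt` tends to `0` as `ε → 0⁺`. -/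
theorem finite_variation_times_continuous_joint_quadratic_variation_zero
    (S T : ℝ) (hS : 0 < S) (hT : 0 < T) (hTS : T < S) (f g : ℝ → ℝ)
    (hf : BoundedVariationOn f (Set.Icc 0 S))
    (hg : ContinuousOn g (Set.Icc 0 S)) :
    Tendsto (fun ε : ℝ =>
        (1 / ε) * ∫ t in (0:ℝ)..T, (f (t + ε) - f t) * (g (t + ε) - g t))
      (nhdsWithin 0 (Set.Ioi 0)) (nhds 0) := by
  set s : Set ℝ := Set.Icc 0 S with hs
  have h0s : (0:ℝ) ∈ s := ⟨le_rfl, hS.le⟩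
  have hSs : S ∈ s := ⟨hS.le, le_rfl⟩
  have hlf := hf.locallyBoundedVariationOn
  set φ : ℝ → ℝ := variationOnFromTo f s 0 with hφdef
  have hφmono : MonotoneOn φ s := variationOnFromTo.monotoneOn hlf h0s
  have hψmono : MonotoneOn (φ - f) s := variationOnFromTo.sub_self_monotoneOn hlf h0s
  set V : ℝ := φ S with hVdef
  have hφnonneg : ∀ t ∈ s, 0 ≤ φ t := fun t ht => variationOnFromTo.nonneg_of_le f s ht.1
  have hφle : ∀ t ∈ s, φ t ≤ V := fun t ht => hφmono ht hSs ht.2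
  have hV0 : 0 ≤ V := hφnonneg S hSs
  -- pointwise bound
  have key : ∀ a ∈ s, ∀ b ∈ s, a ≤ b → |f b - f a| ≤ φ b - φ a := by
    intro a ha b hb hab
    have h3 : variationOnFromTo f s a b = φ b - φ a := by
      rw [hφdef, ← variationOnFromTo.add hlf h0s ha hb]; ring
    have h2 : dist (f a) (f b) ≤ variationOnFromTo f s a b := by
      rw [variationOnFromTo.eq_of_le f s hab, dist_edist]
      exact ENNReal.toReal_mono (hlf a b ha hb)
        (eVariationOn.edist_le f ⟨ha, le_rfl, hab⟩ ⟨hb, hab, le_rfl⟩)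
    calc |f b - f a| = dist (f a) (f b) := by rw [dist_comm, Real.dist_eq]
      _ ≤ variationOnFromTo f s a b := h2
      _ = φ b - φ a := h3
  -- integrability of φ and f on subintervals of s
  have hφInt : ∀ a b : ℝ, Set.uIcc a b ⊆ s → IntervalIntegrable φ volume a b :=
    fun a b hab => (hφmono.mono hab).intervalIntegrable
  have hfInt : ∀ a b : ℝ, Set.uIcc a b ⊆ s → IntervalIntegrable f volume a b := by
    intro a b hab
    have h1 : IntervalIntegrable φ volume a b := (hφmono.mono hab).intervalIntegrable
    have h2 : IntervalIntegrable (φ - f) volume a b := (hψmono.mono hab).intervalIntegrable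
    simpa [Pi.sub_apply, sub_sub_cancel] using h1.sub h2
  -- main estimate
  have main : ∀ ε : ℝ, 0 < ε → ε < S - T → ∀ δ' : ℝ, 0 ≤ δ' →
      (∀ t ∈ Set.Icc (0:ℝ) T, |g (t + ε) - g t| ≤ δ') →
      |(1 / ε) * ∫ t in (0:ℝ)..T, (f (t + ε) - f t) * (g (t + ε) - g t)| ≤ δ' * V := by
    intro ε hε hεST δ' hδ'0 hδ'
    have hTε : T + ε ≤ S := by linarith
    have h0m : (0:ℝ) ∈ Set.Icc (0:ℝ) S := ⟨le_rfl, hS.le⟩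
    have hTm : T ∈ Set.Icc (0:ℝ) S := ⟨hT.le, hTS.le⟩
    have hεm : ε ∈ Set.Icc (0:ℝ) S := ⟨hε.le, by linarith⟩
    have hTεm : T + ε ∈ Set.Icc (0:ℝ) S := ⟨by linarith, hTε⟩
    have hsub1 : Set.uIcc (0:ℝ) T ⊆ s := Set.uIcc_subset_Icc h0m hTm
    have hsub2 : Set.uIcc ε (T + ε) ⊆ s := Set.uIcc_subset_Icc hεm hTεm
    have hsub3 : Set.uIcc (0:ℝ) ε ⊆ s := Set.uIcc_subset_Icc h0m hεm
    have hsub4 : Set.uIcc T (T + ε) ⊆ s := Set.uIcc_subset_Icc hTm hTεm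
    have hsub5 : Set.uIcc ε T ⊆ s := Set.uIcc_subset_Icc hεm hTm
    have hmem : ∀ t ∈ Set.Icc (0:ℝ) T, t ∈ s ∧ t + ε ∈ s := by
      intro t ht
      exact ⟨⟨ht.1, ht.2.trans hTS.le⟩, ⟨by linarith [ht.1], by linarith [ht.2]⟩⟩
    -- integrability of shifted f and φ on [0, T]
    have hfsInt : IntervalIntegrable (fun t => f (t + ε)) volume 0 T := by
      have := (hfInt ε (T + ε) hsub2).comp_add_right ε
      simpa using this
    have hφsInt : IntervalIntegrable (fun t => φ (t + ε)) volume 0 T := by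
      have := (hφInt ε (T + ε) hsub2).comp_add_right ε
      simpa using this
    have hFInt : IntervalIntegrable (fun t => f (t + ε) - f t) volume 0 T :=
      hfsInt.sub (hfInt 0 T hsub1)
    have hBInt : IntervalIntegrable (fun t => (φ (t + ε) - φ t) * δ') volume 0 T :=
      (hφsInt.sub (hφInt 0 T hsub1)).mul_const δ'
    have hGcont : ContinuousOn (fun t => g (t + ε) - g t) (Set.uIcc (0:ℝ) T) := by
      apply ContinuousOn.sub
      · exact hg.comp (continuous_add_right ε).continuousOn (by
          intro t ht
          rw [Set.uIcc_of_le hT.le] at ht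
          exact (hmem t ht).2)
      · exact hg.mono hsub1
    have hProdInt : IntervalIntegrable
        (fun t => (f (t + ε) - f t) * (g (t + ε) - g t)) volume 0 T :=
      hFInt.mul_continuousOn hGcont
    -- pointwise bound of the integrand
    have hpt : ∀ t ∈ Set.Icc (0:ℝ) T,
        |(f (t + ε) - f t) * (g (t + ε) - g t)| ≤ (φ (t + ε) - φ t) * δ' := by
      intro t ht
      obtain ⟨h1, h2⟩ := hmem t ht
      have hk := key t h1 (t + ε) h2 (by linarith)
      rw [abs_mul]
      exact mul_le_mul hk (hδ' t ht) (abs_nonneg _) (le_trans (abs_nonneg _) hk)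
    -- integral bound
    have hI1 : |∫ t in (0:ℝ)..T, (f (t + ε) - f t) * (g (t + ε) - g t)| ≤
        ∫ t in (0:ℝ)..T, (φ (t + ε) - φ t) * δ' := by
      refine le_trans (intervalIntegral.abs_integral_le_integral_abs hT.le) ?_
      exact intervalIntegral.integral_mono_on hT.le hProdInt.abs hBInt hpt
    -- compute/bound the dominating integral
    have hshift : (∫ t in (0:ℝ)..T, φ (t + ε)) = ∫ t in ε..(T + ε), φ t := by
      simpa [add_comm] using intervalIntegral.integral_comp_add_right (a := 0) (b := T) φ ε
    have hA : (∫ t in (0:ℝ)..T, (φ (t + ε) - φ t) * δ') =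
        ((∫ t in T..(T + ε), φ t) - ∫ t in (0:ℝ)..ε, φ t) * δ' := by
      rw [intervalIntegral.integral_mul_const,
        intervalIntegral.integral_sub hφsInt (hφInt 0 T hsub1), hshift]
      have e1 : (∫ t in (0:ℝ)..ε, φ t) + ∫ t in ε..T, φ t = ∫ t in (0:ℝ)..T, φ t :=
        intervalIntegral.integral_add_adjacent_intervals (hφInt 0 ε hsub3) (hφInt ε T hsub5)
      have e2 : (∫ t in ε..T, φ t) + ∫ t in T..(T + ε), φ t = ∫ t in ε..(T + ε), φ t :=
        intervalIntegral.integral_add_adjacent_intervals (hφInt ε T hsub5)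
          (hφInt T (T + ε) hsub4)
      linear_combination (e1 - e2) * δ'
    have hup : (∫ t in T..(T + ε), φ t) ≤ ε * V := by
      have : (∫ t in T..(T + ε), φ t) ≤ ∫ _ in T..(T + ε), V :=
        intervalIntegral.integral_mono_on (by linarith) (hφInt T (T + ε) hsub4)
          intervalIntegrable_const (fun t ht => hφle t
            (hsub4 (Set.Icc_subset_uIcc ht)))
      simpa using this
    have hlo : 0 ≤ ∫ t in (0:ℝ)..ε, φ t := by
      apply intervalIntegral.integral_nonneg hε.le
      intro t ht
      exact hφnonneg t (hsub3 ((Set.uIcc_of_le hε.le).symm ▸ ht))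
    have hI2 : |∫ t in (0:ℝ)..T, (f (t + ε) - f t) * (g (t + ε) - g t)| ≤ ε * V * δ' := by
      refine hI1.trans ?_
      rw [hA]
      have : (∫ t in T..(T + ε), φ t) - (∫ t in (0:ℝ)..ε, φ t) ≤ ε * V := by linarith
      exact mul_le_mul_of_nonneg_right this hδ'0
    -- conclude
    have hεne : ε ≠ 0 := hε.ne'
    rw [abs_mul, abs_of_pos (by positivity : (0:ℝ) < 1 / ε)]
    calc (1 / ε) * |∫ t in (0:ℝ)..T, (f (t + ε) - f t) * (g (t + ε) - g t)|
        ≤ (1 / ε) * (ε * V * δ') := by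
          exact mul_le_mul_of_nonneg_left hI2 (by positivity)
      _ = δ' * V := by field_simp
  -- tendsto via uniform continuity
  rw [Metric.tendsto_nhdsWithin_nhds]
  intro δ hδ
  have hUC : UniformContinuousOn g s :=
    (isCompact_Icc).uniformContinuousOn_of_continuous hg
  rw [Metric.uniformContinuousOn_iff] at hUC
  obtain ⟨η, hη, hη'⟩ := hUC (δ / (2 * (V + 1))) (by positivity)
  refine ⟨min η (S - T), lt_min hη (by linarith), ?_⟩
  intro ε hεIoi hεd
  rw [Real.dist_eq, sub_zero, abs_of_pos hεIoi] at hεd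
  have hε : 0 < ε := hεIoi
  have hεη : ε < η := lt_of_lt_of_le hεd (min_le_left _ _)
  have hεST : ε < S - T := lt_of_lt_of_le hεd (min_le_right _ _)
  have hbound : ∀ t ∈ Set.Icc (0:ℝ) T, |g (t + ε) - g t| ≤ δ / (2 * (V + 1)) := by
    intro t ht
    have h1 : t ∈ s := ⟨ht.1, ht.2.trans hTS.le⟩
    have h2 : t + ε ∈ s := ⟨by linarith [ht.1], by linarith [ht.2]⟩
    have := hη' (t + ε) h2 t h1 (by
      rw [Real.dist_eq]
      simpa [abs_of_pos hε] using hεη)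
    rw [Real.dist_eq] at this
    exact this.le
  have hmain := main ε hε hεST (δ / (2 * (V + 1))) (by positivity) hbound
  rw [Real.dist_eq, sub_zero]
  refine lt_of_le_of_lt hmain ?_
  rw [div_mul_eq_mul_div, div_lt_iff₀ (by positivity)]
  nlinarith
end

section
/- For every k ∈ L¹([0,T]²), A_ε k → 0 in L¹([0,T]) as ε → 0⁺, i.e. lim_{ε→0⁺} ∫_0^T |(A_ε k)(t)| dt = 0. -/
open MeasureTheory Filter Set
open scoped ENNReal

/-- For every `k ∈ L¹([0,T]²)`, the averages
`(A_ε k)(t) = (1/ε) ∫_t^{(t+ε)∧T} ∫_t^{(t+ε)∧T} k(s,r) dr ds` converge to `0` in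
`L¹([0,T])` as `ε → 0⁺`. -/
theorem averaging_operator_Aeps_tendsto_zero
    (T : ℝ) (hT : 0 < T) (k : ℝ → ℝ → ℝ)
    (hk : MeasureTheory.IntegrableOn (fun p : ℝ × ℝ => k p.1 p.2)
      (Set.Icc 0 T ×ˢ Set.Icc 0 T)) :
    Tendsto (fun ε : ℝ =>
        ∫ t in (0:ℝ)..T,
          |(1 / ε) * ∫ s in t..(min (t + ε) T), ∫ r in t..(min (t + ε) T), k s r|)
      (nhdsWithin 0 (Set.Ioi 0)) (nhds 0) := by
  set R : Set (ℝ × ℝ) := Icc 0 T ×ˢ Icc 0 T with hRdef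
  have hRm : MeasurableSet R := measurableSet_Icc.prod measurableSet_Icc
  set k' : ℝ × ℝ → ℝ := hk.1.mk (fun p : ℝ × ℝ => k p.1 p.2) with hk'def
  have hk'meas : Measurable k' := hk.1.stronglyMeasurable_mk.measurable
  have hkk' : (fun p : ℝ × ℝ => k p.1 p.2) =ᵐ[volume.restrict R] k' := hk.1.ae_eq_mk
  set g : ℝ × ℝ → ℝ≥0∞ := fun p => ENNReal.ofReal ‖k' p‖ with hgdef
  have hgmeas : Measurable g := hk'meas.norm.ennreal_ofReal
  have hC : (∫⁻ p in R, g p) ≠ ⊤ := by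
    have h1 : IntegrableOn k' R := (integrable_congr hkk').1 hk
    have h2 := h1.2
    rw [hasFiniteIntegral_iff_norm] at h2
    exact h2.ne
  have hprod : volume.restrict R
      = (volume.restrict (Icc (0:ℝ) T)).prod (volume.restrict (Icc (0:ℝ) T)) := by
    rw [Measure.prod_restrict, ← Measure.volume_eq_prod]
  have hae : ∀ᵐ s ∂(volume.restrict (Icc (0:ℝ) T)),
      ∀ᵐ r ∂(volume.restrict (Icc (0:ℝ) T)), k s r = k' (s, r) := by
    have h0 : ∀ᵐ z : ℝ × ℝ ∂((volume.restrict (Icc (0:ℝ) T)).prod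
        (volume.restrict (Icc (0:ℝ) T))), k z.1 z.2 = k' z := by
      rw [← hprod]; exact hkk'
    exact Measure.ae_ae_of_ae_prod h0
  have hIeq : ∀ t ∈ Icc (0:ℝ) T, ∀ m : ℝ, t ≤ m → m ≤ T →
      (∫ s in t..m, ∫ r in t..m, k s r) = ∫ s in t..m, ∫ r in t..m, k' (s, r) := by
    intro t ht m htm hmT
    have hsub : Ioc t m ⊆ Icc (0:ℝ) T := fun x hx => ⟨le_trans ht.1 hx.1.le, hx.2.trans hmT⟩
    rw [intervalIntegral.integral_of_le htm, intervalIntegral.integral_of_le htm]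
    refine integral_congr_ae ?_
    filter_upwards [ae_restrict_of_ae_restrict_of_subset hsub hae] with s hs
    rw [intervalIntegral.integral_of_le htm, intervalIntegral.integral_of_le htm]
    exact integral_congr_ae (ae_restrict_of_ae_restrict_of_subset hsub hs)
  set E : ℝ → Set (ℝ × ℝ) := fun ε => R ∩ {p : ℝ × ℝ | |p.1 - p.2| ≤ ε} with hEdef
  have hEm : ∀ ε : ℝ, MeasurableSet (E ε) := fun ε =>
    hRm.inter (measurableSet_le (measurable_fst.sub measurable_snd).abs measurable_const)
  have hEmono : ∀ {a b : ℝ}, a ≤ b → E a ⊆ E b := fun hab p hp => ⟨hp.1, hp.2.trans hab⟩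
  have hνle : ∀ ε : ℝ, (volume.withDensity g) (E ε) ≤ ∫⁻ p in R, g p := fun ε => by
    rw [withDensity_apply _ (hEm ε)]
    exact lintegral_mono_set inter_subset_left
  have hνfin : ∀ ε : ℝ, (volume.withDensity g) (E ε) ≠ ⊤ := fun ε =>
    ((hνle ε).trans_lt hC.lt_top).ne
  -- key inequality
  have key : ∀ ε : ℝ, 0 < ε →
      (∫ t in (0:ℝ)..T,
          |(1 / ε) * ∫ s in t..(min (t + ε) T), ∫ r in t..(min (t + ε) T), k s r|)
        ≤ ((volume.withDensity g) (E ε)).toReal := by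
    intro ε hε
    set m : ℝ → ℝ := fun t => min (t + ε) T with hmdef
    have hcongr : (∫ t in (0:ℝ)..T, |(1 / ε) * ∫ s in t..(m t), ∫ r in t..(m t), k s r|)
        = ∫ t in (0:ℝ)..T, |(1 / ε) * ∫ s in t..(m t), ∫ r in t..(m t), k' (s, r)| := by
      refine intervalIntegral.integral_congr fun t ht => ?_
      rw [uIcc_of_le hT.le] at ht
      rw [hIeq t ht (m t) (le_min (le_add_of_nonneg_right hε.le) ht.2) (min_le_right _ _)]
    rw [show (∫ t in (0:ℝ)..T,
          |(1 / ε) * ∫ s in t..(min (t + ε) T), ∫ r in t..(min (t + ε) T), k s r|)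
        = ∫ t in (0:ℝ)..T, |(1 / ε) * ∫ s in t..(m t), ∫ r in t..(m t), k s r| from rfl, hcongr]
    set Λ : ℝ → ℝ≥0∞ := fun t => ∫⁻ p in Ioc t (m t) ×ˢ Ioc t (m t), g p with hΛdef
    -- pointwise bound
    have hpt : ∀ t ∈ Ioc (0:ℝ) T,
        ENNReal.ofReal ‖|(1 / ε) * ∫ s in t..(m t), ∫ r in t..(m t), k' (s, r)|‖
          ≤ ENNReal.ofReal (1 / ε) * Λ t := by
      intro t ht
      have htm : t ≤ m t := le_min (le_add_of_nonneg_right hε.le) ht.2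
      have hΛeq : Λ t = ∫⁻ s in Ioc t (m t), ∫⁻ r in Ioc t (m t), g (s, r) := by
        show (∫⁻ p in Ioc t (m t) ×ˢ Ioc t (m t), g p) = _
        rw [show (volume : Measure (ℝ × ℝ)).restrict (Ioc t (m t) ×ˢ Ioc t (m t))
            = (volume.restrict (Ioc t (m t))).prod (volume.restrict (Ioc t (m t))) by
          rw [Measure.prod_restrict, ← Measure.volume_eq_prod]]
        exact lintegral_prod g hgmeas.aemeasurable
      have hinner : ∀ s : ℝ, ENNReal.ofReal ‖∫ r in t..(m t), k' (s, r)‖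
          ≤ ∫⁻ r in Ioc t (m t), g (s, r) := by
        intro s
        rw [intervalIntegral.integral_of_le htm]
        exact le_trans (ENNReal.ofReal_le_ofReal (norm_integral_le_lintegral_norm _))
          ENNReal.ofReal_toReal_le
      have houter : ENNReal.ofReal ‖∫ s in t..(m t), ∫ r in t..(m t), k' (s, r)‖ ≤ Λ t := by
        rw [intervalIntegral.integral_of_le htm, hΛeq]
        refine le_trans (ENNReal.ofReal_le_ofReal (norm_integral_le_lintegral_norm _)) ?_
        refine le_trans ENNReal.ofReal_toReal_le ?_
        exact lintegral_mono fun s => hinner s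
      have habs : ‖|(1 / ε) * ∫ s in t..(m t), ∫ r in t..(m t), k' (s, r)|‖
          = (1 / ε) * |∫ s in t..(m t), ∫ r in t..(m t), k' (s, r)| := by
        rw [Real.norm_eq_abs, abs_abs, abs_mul, abs_of_pos (by positivity)]
      rw [habs, ENNReal.ofReal_mul (by positivity)]
      refine mul_le_mul_right ?_ _
      rw [← Real.norm_eq_abs]
      exact houter
    -- Fubini swap bound
    have hswap : (∫⁻ t in Ioc (0:ℝ) T, Λ t)
        ≤ ENNReal.ofReal ε * (volume.withDensity g) (E ε) := by
      have hrw : ∀ t : ℝ, Λ t = ∫⁻ p : ℝ × ℝ, (Ioc t (m t) ×ˢ Ioc t (m t)).indicator g p :=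
        fun t => (lintegral_indicator (measurableSet_Ioc.prod measurableSet_Ioc) g).symm
      have hswapeq : (∫⁻ t in Ioc (0:ℝ) T, ∫⁻ p : ℝ × ℝ,
              (Ioc t (m t) ×ˢ Ioc t (m t)).indicator g p)
          = ∫⁻ p : ℝ × ℝ, ∫⁻ t in Ioc (0:ℝ) T,
              (Ioc t (m t) ×ˢ Ioc t (m t)).indicator g p := by
        refine lintegral_lintegral_swap ?_
        have hU : MeasurableSet {z : ℝ × (ℝ × ℝ) |
            z.2 ∈ Ioc z.1 (m z.1) ×ˢ Ioc z.1 (m z.1)} := by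
          have h1 : Measurable fun z : ℝ × (ℝ × ℝ) => z.1 := measurable_fst
          have h2 : Measurable fun z : ℝ × (ℝ × ℝ) => z.2.1 := measurable_fst.comp measurable_snd
          have h3 : Measurable fun z : ℝ × (ℝ × ℝ) => z.2.2 := measurable_snd.comp measurable_snd
          have hmin : Measurable fun z : ℝ × (ℝ × ℝ) => m z.1 :=
            (h1.add_const ε).min measurable_const
          have : {z : ℝ × (ℝ × ℝ) | z.2 ∈ Ioc z.1 (m z.1) ×ˢ Ioc z.1 (m z.1)}
              = ({z | z.1 < z.2.1} ∩ {z | z.2.1 ≤ m z.1})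
                ∩ ({z | z.1 < z.2.2} ∩ {z | z.2.2 ≤ m z.1}) := by
            ext z
            simp [Set.mem_prod, Set.mem_Ioc, and_assoc]
          rw [this]
          exact ((measurableSet_lt h1 h2).inter (measurableSet_le h2 hmin)).inter
            ((measurableSet_lt h1 h3).inter (measurableSet_le h3 hmin))
        have : (Function.uncurry fun t (p : ℝ × ℝ) =>
              (Ioc t (m t) ×ˢ Ioc t (m t)).indicator g p)
            = Set.indicator {z : ℝ × (ℝ × ℝ) | z.2 ∈ Ioc z.1 (m z.1) ×ˢ Ioc z.1 (m z.1)}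
                (fun z => g z.2) := by
          funext z
          simp only [Function.uncurry, Set.indicator_apply, Set.mem_setOf_eq]
        rw [this]
        exact ((hgmeas.comp measurable_snd).indicator hU).aemeasurable
      have hinner2 : ∀ p : ℝ × ℝ,
          (∫⁻ t in Ioc (0:ℝ) T, (Ioc t (m t) ×ˢ Ioc t (m t)).indicator g p)
            ≤ g p * (ENNReal.ofReal ε * (E ε).indicator 1 p) := by
        intro p
        have hA : MeasurableSet {t : ℝ | p ∈ Ioc t (m t) ×ˢ Ioc t (m t)} := by
          have hmin : Measurable fun t : ℝ => m t :=
            (measurable_id.add_const ε).min measurable_const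
          have : {t : ℝ | p ∈ Ioc t (m t) ×ˢ Ioc t (m t)}
              = ({t | t < p.1} ∩ {t | p.1 ≤ m t}) ∩ ({t | t < p.2} ∩ {t | p.2 ≤ m t}) := by
            ext t
            simp [Set.mem_prod, Set.mem_Ioc, and_assoc]
          rw [this]
          exact ((measurableSet_lt measurable_id measurable_const).inter
              (measurableSet_le measurable_const hmin)).inter
            ((measurableSet_lt measurable_id measurable_const).inter
              (measurableSet_le measurable_const hmin))
        have hpt2 : ∀ t : ℝ, (Ioc t (m t) ×ˢ Ioc t (m t)).indicator g p
            = g p * ({t : ℝ | p ∈ Ioc t (m t) ×ˢ Ioc t (m t)}).indicator 1 t := by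
          intro t
          by_cases h : p ∈ Ioc t (m t) ×ˢ Ioc t (m t)
          · rw [Set.indicator_of_mem h, Set.indicator_of_mem
              (show t ∈ {t' : ℝ | p ∈ Ioc t' (m t') ×ˢ Ioc t' (m t')} from h),
              Pi.one_apply, mul_one]
          · rw [Set.indicator_of_notMem h, Set.indicator_of_notMem
              (show t ∉ {t' : ℝ | p ∈ Ioc t' (m t') ×ˢ Ioc t' (m t')} from h), mul_zero]
        simp_rw [hpt2]
        rw [lintegral_const_mul' _ _ ENNReal.ofReal_ne_top,
          lintegral_indicator_one hA]
        refine mul_le_mul_right ?_ (g p)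
        by_cases hp : p ∈ E ε
        · rw [Set.indicator_of_mem hp, Pi.one_apply, mul_one]
          refine le_trans (Measure.restrict_apply_le _ _) ?_
          have hsubA : {t : ℝ | p ∈ Ioc t (m t) ×ˢ Ioc t (m t)} ⊆ Ico (p.1 - ε) p.1 := by
            intro t htA
            have h1 : p.1 ≤ t + ε := le_trans htA.1.2 (min_le_left _ _)
            exact ⟨by linarith, htA.1.1⟩
          refine le_trans (measure_mono hsubA) (le_of_eq ?_)
          rw [Real.volume_Ico, show p.1 - (p.1 - ε) = ε by ring]
        · rw [Set.indicator_of_notMem hp, mul_zero, Measure.restrict_apply hA, le_zero_iff]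
          have hempty : {t : ℝ | p ∈ Ioc t (m t) ×ˢ Ioc t (m t)} ∩ Ioc (0:ℝ) T = ∅ := by
            ext t
            simp only [Set.mem_inter_iff, Set.mem_empty_iff_false, iff_false, not_and]
            intro htA htT
            obtain ⟨⟨ht1, ht2⟩, ht3, ht4⟩ := htA
            have h2 : p.1 ≤ t + ε ∧ p.1 ≤ T := le_min_iff.1 ht2
            have h4 : p.2 ≤ t + ε ∧ p.2 ≤ T := le_min_iff.1 ht4
            have hpR : p ∈ R := Set.mem_prod.2
              ⟨Set.mem_Icc.2 ⟨by linarith [htT.1], h2.2⟩,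
               Set.mem_Icc.2 ⟨by linarith [htT.1], h4.2⟩⟩
            have habs2 : |p.1 - p.2| ≤ ε := abs_le.2 ⟨by linarith [h4.1, ht1], by linarith [h2.1, ht3]⟩
            exact hp ⟨hpR, habs2⟩
          rw [hempty, measure_empty]
      calc (∫⁻ t in Ioc (0:ℝ) T, Λ t)
          = ∫⁻ p : ℝ × ℝ, ∫⁻ t in Ioc (0:ℝ) T,
              (Ioc t (m t) ×ˢ Ioc t (m t)).indicator g p := by
            simp_rw [hrw]; exact hswapeq
        _ ≤ ∫⁻ p : ℝ × ℝ, g p * (ENNReal.ofReal ε * (E ε).indicator 1 p) :=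
            lintegral_mono hinner2
        _ = ∫⁻ p : ℝ × ℝ, ENNReal.ofReal ε * (E ε).indicator g p := by
            refine lintegral_congr fun p => ?_
            by_cases hp : p ∈ E ε
            · rw [Set.indicator_of_mem hp, Set.indicator_of_mem hp, Pi.one_apply, mul_one]
              ring
            · simp [Set.indicator_of_notMem hp]
        _ = ENNReal.ofReal ε * ∫⁻ p : ℝ × ℝ, (E ε).indicator g p :=
            lintegral_const_mul' _ _ ENNReal.ofReal_ne_top
        _ = ENNReal.ofReal ε * (volume.withDensity g) (E ε) := by
            rw [lintegral_indicator (hEm ε), withDensity_apply _ (hEm ε)]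
    -- assemble
    have hb1 : (∫ t in (0:ℝ)..T, |(1 / ε) * ∫ s in t..(m t), ∫ r in t..(m t), k' (s, r)|)
        ≤ (∫⁻ t in Ioc (0:ℝ) T,
            ENNReal.ofReal ‖|(1 / ε) * ∫ s in t..(m t), ∫ r in t..(m t), k' (s, r)|‖).toReal := by
      rw [intervalIntegral.integral_of_le hT.le]
      refine le_trans (le_abs_self _) ?_
      rw [← Real.norm_eq_abs]
      exact norm_integral_le_lintegral_norm _
    refine le_trans hb1 (ENNReal.toReal_mono (hνfin ε) ?_)
    refine le_trans (setLIntegral_mono' measurableSet_Ioc hpt) ?_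
    rw [lintegral_const_mul' _ _ ENNReal.ofReal_ne_top]
    refine le_trans (mul_le_mul_right hswap _) (le_of_eq ?_)
    rw [← mul_assoc, ← ENNReal.ofReal_mul (by positivity), one_div_mul_cancel hε.ne',
      ENNReal.ofReal_one, one_mul]
  -- diagonal has measure zero
  have hdiag0 : (volume : Measure (ℝ × ℝ)) {q : ℝ × ℝ | q.1 = q.2} = 0 := by
    have hD : MeasurableSet {q : ℝ × ℝ | q.1 = q.2} :=
      measurableSet_eq_fun measurable_fst measurable_snd
    rw [Measure.volume_eq_prod, Measure.prod_apply hD]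
    have hpre : ∀ x : ℝ, (Prod.mk x ⁻¹' {q : ℝ × ℝ | q.1 = q.2}) = {x} := by
      intro x; ext y; simp [eq_comm]
    simp_rw [hpre, Real.volume_singleton, lintegral_zero]
  -- limit along 1/(n+1)
  have hν0 : Tendsto (fun n : ℕ => (volume.withDensity g) (E (1 / (n + 1))))
      atTop (nhds 0) := by
    have hanti : Antitone fun n : ℕ => E (1 / (n + 1 : ℝ)) := by
      intro a b hab
      refine hEmono (one_div_le_one_div_of_le (by positivity) ?_)
      exact_mod_cast Nat.add_le_add_right hab 1
    have hint : (volume.withDensity g) (⋂ n : ℕ, E (1 / (n + 1))) = 0 := by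
      refine withDensity_absolutelyContinuous volume g (measure_mono_null ?_ hdiag0)
      intro p hp
      simp only [Set.mem_iInter] at hp
      have habs : |p.1 - p.2| ≤ 0 := by
        by_contra hlt
        push_neg at hlt
        obtain ⟨n, hn⟩ := exists_nat_one_div_lt hlt
        exact absurd ((hp n).2) (not_le.2 hn)
      have : p.1 - p.2 = 0 := abs_eq_zero.1 (le_antisymm habs (abs_nonneg _))
      exact sub_eq_zero.1 this
    have := tendsto_measure_iInter_atTop (μ := volume.withDensity g)
      (fun n => (hEm _).nullMeasurableSet) hanti ⟨0, hνfin _⟩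
    rw [hint] at this
    exact this
  -- upper bound tends to zero
  have hGt : Tendsto (fun ε : ℝ => ((volume.withDensity g) (E ε)).toReal)
      (nhdsWithin 0 (Set.Ioi 0)) (nhds 0) := by
    refine tendsto_order.2 ⟨?_, ?_⟩
    · intro a ha
      filter_upwards with ε using lt_of_lt_of_le ha ENNReal.toReal_nonneg
    · intro a ha
      have h2 : Tendsto (fun n : ℕ => ((volume.withDensity g) (E (1 / (n + 1)))).toReal)
          atTop (nhds 0) := by
        have := (ENNReal.tendsto_toReal (a := 0) (by simp)).comp hν0
        simpa [Function.comp_def] using this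
      obtain ⟨N, hN⟩ := (h2.eventually_lt_const ha).exists
      have hNpos : (0:ℝ) < 1 / (N + 1) := by positivity
      filter_upwards [Ioc_mem_nhdsGT_of_mem (show (0:ℝ) ∈ Ico (0:ℝ) (1 / (N + 1)) from
        ⟨le_refl _, hNpos⟩)] with ε hε
      calc ((volume.withDensity g) (E ε)).toReal
          ≤ ((volume.withDensity g) (E (1 / (N + 1)))).toReal :=
            ENNReal.toReal_mono (hνfin _) (measure_mono (hEmono hε.2))
        _ < a := hN
  refine tendsto_of_tendsto_of_tendsto_of_le_of_le' tendsto_const_nhds hGt ?_ ?_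
  · filter_upwards with ε using
      intervalIntegral.integral_nonneg hT.le (fun t _ => abs_nonneg _)
  · filter_upwards [self_mem_nhdsWithin] with ε hε using key ε hε
end

section
/- For every k ∈ L¹([0,T]) and every ε > 0, one has ∫_0^T |(B_ε k)(t)| dt ≤ 2 ∫_0^T |k(s)| ds, i.e. the operator B_ε : L¹([0,T]) → L¹([0,T]) has operator norm at most 2, uniformly in ε. -/
open MeasureTheory Filter Set ENNReal

lemma aux_Beps (T : ℝ) (hT : 0 < T) (K : ℝ → ℝ) (hKm : Measurable K)
    (hK : MeasureTheory.IntegrableOn K (Set.Icc 0 T))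
    (ε : ℝ) (hε : 0 < ε) :
    ∫ t in (0:ℝ)..T, abs ((1 / ε) * ∫ s in (max (t - ε) 0)..t, |K s - K t|)
      ≤ 2 * ∫ s in (0:ℝ)..T, |K s| := by
  have h0T : (0:ℝ) ≤ T := hT.le
  set a : ℝ → ℝ := fun t => max (t - ε) 0 with ha
  have ha_meas : Measurable a := (measurable_id.sub_const ε).max measurable_const
  have ha_nonneg : ∀ t, 0 ≤ a t := fun t => le_max_right _ _
  have ha_le : ∀ t, 0 ≤ t → a t ≤ t := fun t ht => max_le (by linarith) ht
  have ha_ge : ∀ t, t - ε ≤ a t := fun t => le_max_left _ _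
  have hsub : ∀ t ∈ Ioc (0:ℝ) T, Ioc (a t) t ⊆ Icc 0 T := by
    intro t ht s hs
    exact ⟨le_trans (ha_nonneg t) hs.1.le, hs.2.trans ht.2⟩
  set I : ℝ≥0∞ := ∫⁻ s in Ioc (0:ℝ) T, ENNReal.ofReal |K s| with hIdef
  -- measurability of the outer integrand
  have hS : MeasurableSet {p : ℝ × ℝ | a p.1 < p.2 ∧ p.2 ≤ p.1} :=
    (measurableSet_lt (ha_meas.comp measurable_fst) measurable_snd).inter
      (measurableSet_le measurable_snd measurable_fst)
  have hψm : StronglyMeasurable fun p : ℝ × ℝ =>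
      Set.indicator {p : ℝ × ℝ | a p.1 < p.2 ∧ p.2 ≤ p.1} (fun p => |K p.2 - K p.1|) p :=
    (((hKm.comp measurable_snd).sub (hKm.comp measurable_fst)).abs.indicator hS).stronglyMeasurable
  have hFm : StronglyMeasurable fun t : ℝ => ∫ s, Set.indicator
      {p : ℝ × ℝ | a p.1 < p.2 ∧ p.2 ≤ p.1} (fun p => |K p.2 - K p.1|) (t, s) :=
    hψm.integral_prod_right'
  have hF : ∀ t : ℝ, 0 ≤ t → (∫ s in a t..t, |K s - K t|)
      = ∫ s, Set.indicator {p : ℝ × ℝ | a p.1 < p.2 ∧ p.2 ≤ p.1}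
          (fun p => |K p.2 - K p.1|) (t, s) := by
    intro t ht
    rw [intervalIntegral.integral_of_le (ha_le t ht),
      ← MeasureTheory.integral_indicator measurableSet_Ioc]
    refine integral_congr_ae (Filter.Eventually.of_forall fun s => ?_)
    simp only [Set.indicator_apply, Set.mem_Ioc, Set.mem_setOf_eq]
  have hg_meas : AEStronglyMeasurable
      (fun t => abs (1 / ε * ∫ s in a t..t, |K s - K t|)) (volume.restrict (Ioc 0 T)) := by
    refine ((hFm.measurable.const_mul (1/ε)).abs).aestronglyMeasurable.congr ?_
    refine (ae_restrict_iff' measurableSet_Ioc).2 (Filter.Eventually.of_forall fun t ht => ?_)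
    dsimp only
    rw [hF t ht.1.le]
  rw [intervalIntegral.integral_of_le h0T,
    MeasureTheory.integral_eq_lintegral_of_nonneg_ae
      (Filter.Eventually.of_forall fun t => abs_nonneg _) hg_meas]
  have hKabs_int : IntegrableOn (fun s => |K s|) (Ioc (0:ℝ) T) :=
    (hK.mono_set Ioc_subset_Icc_self).abs
  have hRHS : ∫ s in (0:ℝ)..T, |K s| = I.toReal := by
    rw [intervalIntegral.integral_of_le h0T,
      MeasureTheory.integral_eq_lintegral_of_nonneg_ae
        (Filter.Eventually.of_forall fun s => abs_nonneg _)
        hKm.abs.aestronglyMeasurable]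
  have hI_ne : I ≠ ∞ := by
    have h1 : I = ∫⁻ s in Ioc (0:ℝ) T, (‖K s‖₊ : ℝ≥0∞) := by
      refine lintegral_congr fun s => ?_
      rw [← Real.norm_eq_abs, ofReal_norm, enorm_eq_nnnorm]
    rw [h1]
    exact ((hK.mono_set Ioc_subset_Icc_self).2).ne
  -- the key bound in ℝ≥0∞
  have key : (∫⁻ t in Ioc (0:ℝ) T, ENNReal.ofReal (abs (1 / ε * ∫ s in a t..t, |K s - K t|)))
      ≤ 2 * I := by
    have step1 : ∀ t ∈ Ioc (0:ℝ) T,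
        ENNReal.ofReal (abs (1 / ε * ∫ s in a t..t, |K s - K t|))
          ≤ ENNReal.ofReal (1/ε) *
            ((∫⁻ s in Ioc (a t) t, ENNReal.ofReal |K s|)
              + ENNReal.ofReal |K t| * ENNReal.ofReal ε) := by
      intro t ht
      have hat : a t ≤ t := ha_le t ht.1.le
      have hsub' : Ioc (a t) t ⊆ Icc 0 T := hsub t ht
      have hint : IntegrableOn (fun s => |K s - K t|) (Ioc (a t) t) :=
        ((hK.mono_set hsub').sub (integrableOn_const measure_Ioc_lt_top.ne)).abs
      have h1 : (abs (1 / ε * ∫ s in a t..t, |K s - K t|))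
          = 1 / ε * ∫ s in Ioc (a t) t, |K s - K t| := by
        rw [intervalIntegral.integral_of_le hat, abs_of_nonneg]
        exact mul_nonneg (by positivity) (integral_nonneg fun s => abs_nonneg _)
      rw [h1, ENNReal.ofReal_mul (by positivity)]
      refine mul_le_mul_right ?_ _
      calc ENNReal.ofReal (∫ s in Ioc (a t) t, |K s - K t|)
          = ∫⁻ s in Ioc (a t) t, ENNReal.ofReal |K s - K t| :=
            ofReal_integral_eq_lintegral_ofReal hint
              (Filter.Eventually.of_forall fun s => abs_nonneg _)
        _ ≤ ∫⁻ s in Ioc (a t) t, (ENNReal.ofReal |K s| + ENNReal.ofReal |K t|) := by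
            refine lintegral_mono fun s => ?_
            rw [← ENNReal.ofReal_add (abs_nonneg _) (abs_nonneg _)]
            exact ENNReal.ofReal_le_ofReal (abs_sub _ _)
        _ = (∫⁻ s in Ioc (a t) t, ENNReal.ofReal |K s|)
              + ENNReal.ofReal |K t| * volume (Ioc (a t) t) := by
            rw [lintegral_add_right _ measurable_const, setLIntegral_const]
        _ ≤ _ := by
            refine add_le_add_right (mul_le_mul_right ?_ _) _
            rw [Real.volume_Ioc]
            exact ENNReal.ofReal_le_ofReal (by linarith [ha_ge t])
    have hBmeas : Measurable fun t : ℝ => ENNReal.ofReal |K t| * ENNReal.ofReal ε :=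
      (hKm.abs.ennreal_ofReal).mul_const _
    have hA : (∫⁻ t in Ioc (0:ℝ) T, ∫⁻ s in Ioc (a t) t, ENNReal.ofReal |K s|)
        ≤ ENNReal.ofReal ε * I := by
      have hrw : ∀ t : ℝ, (∫⁻ s in Ioc (a t) t, ENNReal.ofReal |K s|)
          = ∫⁻ s, Set.indicator {p : ℝ × ℝ | a p.1 < p.2 ∧ p.2 ≤ p.1}
              (fun p => ENNReal.ofReal |K p.2|) (t, s) := by
        intro t
        rw [← lintegral_indicator measurableSet_Ioc]
        refine lintegral_congr fun s => ?_
        simp only [Set.indicator_apply, Set.mem_Ioc, Set.mem_setOf_eq]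
      simp_rw [hrw]
      have hunc : AEMeasurable (Function.uncurry fun (t s : ℝ) =>
          Set.indicator {p : ℝ × ℝ | a p.1 < p.2 ∧ p.2 ≤ p.1}
            (fun p => ENNReal.ofReal |K p.2|) (t, s))
          ((volume.restrict (Ioc (0:ℝ) T)).prod volume) := by
        have hm : Measurable fun p : ℝ × ℝ => Set.indicator {p : ℝ × ℝ | a p.1 < p.2 ∧ p.2 ≤ p.1}
            (fun p => ENNReal.ofReal |K p.2|) p :=
          (((hKm.comp measurable_snd).abs).ennreal_ofReal).indicator hS
        exact hm.aemeasurable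
      rw [lintegral_lintegral_swap hunc]
      have hUmeas : ∀ s : ℝ, MeasurableSet {t : ℝ | a t < s ∧ s ≤ t} := fun s =>
        (measurableSet_lt ha_meas measurable_const).inter
          (measurableSet_le measurable_const measurable_id)
      have hinner : ∀ s : ℝ, (∫⁻ t in Ioc (0:ℝ) T,
          Set.indicator {p : ℝ × ℝ | a p.1 < p.2 ∧ p.2 ≤ p.1}
            (fun p => ENNReal.ofReal |K p.2|) (t, s))
          ≤ Set.indicator (Ioc (0:ℝ) T)
              (fun s => ENNReal.ofReal |K s| * ENNReal.ofReal ε) s := by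
        intro s
        have h1 : (fun t : ℝ => Set.indicator {p : ℝ × ℝ | a p.1 < p.2 ∧ p.2 ≤ p.1}
            (fun p => ENNReal.ofReal |K p.2|) (t, s))
            = fun t => Set.indicator {t : ℝ | a t < s ∧ s ≤ t}
                (fun _ => ENNReal.ofReal |K s|) t := by
          funext t
          simp only [Set.indicator_apply, Set.mem_setOf_eq]
        rw [h1, lintegral_indicator_const (hUmeas s), Measure.restrict_apply (hUmeas s)]
        by_cases hs : s ∈ Ioc (0:ℝ) T
        · rw [Set.indicator_of_mem hs]
          refine mul_le_mul_right ?_ _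
          have hsubU : {t : ℝ | a t < s ∧ s ≤ t} ∩ Ioc 0 T ⊆ Ico s (s + ε) := by
            rintro t ⟨⟨h1', h2'⟩, _⟩
            exact ⟨h2', by linarith [ha_ge t]⟩
          refine le_trans (measure_mono hsubU) ?_
          rw [Real.volume_Ico, add_sub_cancel_left]
        · rw [Set.indicator_of_notMem hs]
          have hempty : {t : ℝ | a t < s ∧ s ≤ t} ∩ Ioc 0 T = ∅ := by
            ext t
            simp only [mem_inter_iff, mem_setOf_eq, mem_Ioc, mem_empty_iff_false, iff_false,
              not_and]
            rintro ⟨h1', h2'⟩ h3' h4'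
            exact hs ⟨lt_of_le_of_lt (ha_nonneg t) h1', h2'.trans h4'⟩
          rw [hempty, measure_empty, mul_zero]
      calc (∫⁻ s, ∫⁻ t in Ioc (0:ℝ) T,
              Set.indicator {p : ℝ × ℝ | a p.1 < p.2 ∧ p.2 ≤ p.1}
                (fun p => ENNReal.ofReal |K p.2|) (t, s))
          ≤ ∫⁻ s, Set.indicator (Ioc (0:ℝ) T)
              (fun s => ENNReal.ofReal |K s| * ENNReal.ofReal ε) s := lintegral_mono hinner
        _ = ∫⁻ s in Ioc (0:ℝ) T, ENNReal.ofReal |K s| * ENNReal.ofReal ε :=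
            lintegral_indicator measurableSet_Ioc _
        _ = I * ENNReal.ofReal ε :=
            lintegral_mul_const _ hKm.abs.ennreal_ofReal
        _ = ENNReal.ofReal ε * I := mul_comm _ _
    have hB : (∫⁻ t in Ioc (0:ℝ) T, ENNReal.ofReal |K t| * ENNReal.ofReal ε)
        = ENNReal.ofReal ε * I := by
      rw [lintegral_mul_const _ hKm.abs.ennreal_ofReal]
      exact mul_comm _ _
    calc (∫⁻ t in Ioc (0:ℝ) T, ENNReal.ofReal (abs (1 / ε * ∫ s in a t..t, |K s - K t|)))
        ≤ ∫⁻ t in Ioc (0:ℝ) T, ENNReal.ofReal (1/ε) *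
            ((∫⁻ s in Ioc (a t) t, ENNReal.ofReal |K s|)
              + ENNReal.ofReal |K t| * ENNReal.ofReal ε) :=
          lintegral_mono_ae ((ae_restrict_iff' measurableSet_Ioc).2
            (Filter.Eventually.of_forall step1))
      _ = ENNReal.ofReal (1/ε) * ∫⁻ t in Ioc (0:ℝ) T,
            ((∫⁻ s in Ioc (a t) t, ENNReal.ofReal |K s|)
              + ENNReal.ofReal |K t| * ENNReal.ofReal ε) :=
          lintegral_const_mul' _ _ ENNReal.ofReal_ne_top
      _ ≤ ENNReal.ofReal (1/ε) * (ENNReal.ofReal ε * I + ENNReal.ofReal ε * I) := by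
          refine mul_le_mul_right ?_ _
          rw [lintegral_add_right _ hBmeas, hB]
          exact add_le_add_left hA _
      _ = 2 * I := by
          have hone : ENNReal.ofReal (1/ε) * ENNReal.ofReal ε = 1 := by
            rw [← ENNReal.ofReal_mul (by positivity), one_div, inv_mul_cancel₀ hε.ne',
              ENNReal.ofReal_one]
          calc ENNReal.ofReal (1/ε) * (ENNReal.ofReal ε * I + ENNReal.ofReal ε * I)
              = (ENNReal.ofReal (1/ε) * ENNReal.ofReal ε) * (2 * I) := by ring
            _ = 2 * I := by rw [hone, one_mul]
  rw [hRHS]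
  calc (∫⁻ t in Ioc (0:ℝ) T, ENNReal.ofReal (abs (1 / ε * ∫ s in a t..t, |K s - K t|))).toReal
      ≤ (2 * I).toReal :=
        ENNReal.toReal_mono (ENNReal.mul_ne_top (by simp) hI_ne) key
    _ = 2 * I.toReal := by rw [ENNReal.toReal_mul, ENNReal.toReal_ofNat]

/-- The operator `(B_ε k)(t) = (1/ε) ∫_{max(t−ε,0)}^{t} |k(s) − k(t)| ds` on `L¹([0,T])`
has operator norm at most `2`, uniformly in `ε > 0`. -/
theorem averaging_operator_Beps_norm_le_two
    (T : ℝ) (hT : 0 < T) (k : ℝ → ℝ)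
    (hk : MeasureTheory.IntegrableOn k (Set.Icc 0 T))
    (ε : ℝ) (hε : 0 < ε) :
    ∫ t in (0:ℝ)..T, abs ((1 / ε) * ∫ s in (max (t - ε) 0)..t, |k s - k t|)
      ≤ 2 * ∫ s in (0:ℝ)..T, |k s| := by
  set K := hk.aestronglyMeasurable.mk k with hKdef
  have hKm : StronglyMeasurable K := hk.aestronglyMeasurable.stronglyMeasurable_mk
  have hkK : k =ᵐ[volume.restrict (Icc 0 T)] K := hk.aestronglyMeasurable.ae_eq_mk
  have hkK' : ∀ᵐ s : ℝ, s ∈ Icc (0:ℝ) T → k s = K s :=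
    (ae_restrict_iff' measurableSet_Icc).1 hkK
  have hK : IntegrableOn K (Icc 0 T) := hk.congr hkK
  have hmain := aux_Beps T hT K hKm.measurable hK ε hε
  have hL : (∫ t in (0:ℝ)..T, (abs ((1 / ε) * ∫ s in (max (t - ε) 0)..t, |k s - k t|)))
      = ∫ t in (0:ℝ)..T, (abs ((1 / ε) * ∫ s in (max (t - ε) 0)..t, |K s - K t|)) := by
    refine intervalIntegral.integral_congr_ae ?_
    filter_upwards [hkK'] with t htk ht
    rw [Set.uIoc_of_le hT.le] at ht
    have hkt : k t = K t := htk ⟨ht.1.le, ht.2⟩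
    have hinner : (∫ s in (max (t - ε) 0)..t, |k s - k t|)
        = ∫ s in (max (t - ε) 0)..t, |K s - K t| := by
      refine intervalIntegral.integral_congr_ae ?_
      filter_upwards [hkK'] with s hsk hs
      have hmaxle : max (t - ε) 0 ≤ t := max_le (by linarith [ht.1]) ht.1.le
      rw [Set.uIoc_of_le hmaxle] at hs
      have hks : k s = K s := hsk ⟨le_trans (le_max_right _ _) hs.1.le, hs.2.trans ht.2⟩
      rw [hks, hkt]
    rw [hinner]
  have hR : (∫ s in (0:ℝ)..T, |k s|) = ∫ s in (0:ℝ)..T, |K s| := by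
    refine intervalIntegral.integral_congr_ae ?_
    filter_upwards [hkK'] with s hsk hs
    rw [Set.uIoc_of_le hT.le] at hs
    rw [hsk ⟨hs.1.le, hs.2⟩]
  rw [hL, hR]
  exact hmain
end

section
/- Let H be a separable Hilbert space, let 0 ≤ T' < T and let ε ∈ (0, T − T']. For every y ∈ L²([0,T]; H) one has ∫_0^T ‖T^ε(y)_s‖²_H ds ≤ ∫_0^{T'} ‖y_{t+ε} − y_t‖²_H dt ≤ 4 ∫_0^T ‖y_t‖²_H dt; in particular the operators T^ε are bounded on L²([0,T]; H) uniformly in ε. -/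
open MeasureTheory Filter Set
open scoped ENNReal NNReal

/-- Cauchy–Schwarz for `lintegral`: `(∫⁻ f)² ≤ μ(univ) * ∫⁻ f²`. -/
private lemma cs_lintegral {α : Type*} [MeasurableSpace α] (μ : Measure α)
    {f : α → ℝ≥0∞} (hf : AEMeasurable f μ) :
    (∫⁻ x, f x ∂μ) ^ 2 ≤ μ Set.univ * ∫⁻ x, f x ^ 2 ∂μ := by
  have hpq : Real.HolderConjugate 2 2 := ⟨by norm_num, by norm_num, by norm_num⟩
  have h := ENNReal.lintegral_mul_le_Lp_mul_Lq μ hpq hf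
    (aemeasurable_const (b := (1 : ℝ≥0∞)))
  simp only [Pi.mul_apply, mul_one, ENNReal.one_rpow, lintegral_one] at h
  calc (∫⁻ x, f x ∂μ) ^ 2
      ≤ ((∫⁻ x, f x ^ (2:ℝ) ∂μ) ^ (1/(2:ℝ)) * (μ Set.univ) ^ (1/(2:ℝ))) ^ 2 :=
        pow_le_pow_left' h 2
    _ = (∫⁻ x, f x ^ (2:ℝ) ∂μ) * μ Set.univ := by
        rw [mul_pow, ← ENNReal.rpow_natCast ((∫⁻ x, f x ^ (2:ℝ) ∂μ) ^ (1/(2:ℝ))) 2,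
          ← ENNReal.rpow_natCast ((μ Set.univ) ^ (1/(2:ℝ))) 2,
          ← ENNReal.rpow_mul, ← ENNReal.rpow_mul]
        norm_num
    _ = μ Set.univ * ∫⁻ x, f x ^ 2 ∂μ := by
        rw [mul_comm]
        congr 1
        refine lintegral_congr fun x => ?_
        rw [← ENNReal.rpow_natCast (f x) 2]
        norm_num

/-- For `y ∈ L²([0,T]; H)` and `0 < ε ≤ T − T'`, the operator
`T^ε(y)_s = (1/ε) ∫_{max(s−ε,0)}^{min(s,T')} (y(t+ε) − y(t)) dt` satisfies
`∫_0^T ‖T^ε(y)_s‖² ds ≤ ∫_0^{T'} ‖y(t+ε) − y(t)‖² dt ≤ 4 ∫_0^T ‖y(t)‖² dt`;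
in particular the operators `T^ε` are bounded on `L²([0,T]; H)` uniformly in `ε`. -/
theorem Teps_uniformly_bounded
    (H : Type*) [NormedAddCommGroup H] [InnerProductSpace ℝ H] [CompleteSpace H]
    [SecondCountableTopology H]
    (T T' : ℝ) (hT' : 0 ≤ T') (hT'T : T' < T)
    (ε : ℝ) (hε : 0 < ε) (hεT : ε ≤ T - T')
    (y : ℝ → H) (hy : MemLp y 2 (volume.restrict (Set.Icc 0 T))) :
    (∫ s in (0:ℝ)..T,
        ‖(1 / ε) • ∫ t in Set.Ioc (max (s - ε) 0) (min s T'), (y (t + ε) - y t)‖ ^ 2)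
      ≤ (∫ t in (0:ℝ)..T', ‖y (t + ε) - y t‖ ^ 2) ∧
    (∫ t in (0:ℝ)..T', ‖y (t + ε) - y t‖ ^ 2) ≤ 4 * ∫ t in (0:ℝ)..T, ‖y t‖ ^ 2 := by
  have hT : (0:ℝ) ≤ T := le_of_lt (lt_of_le_of_lt hT' hT'T)
  have hT'e : T' + ε ≤ T := by linarith
  -- a strongly measurable representative of `y`
  set z : ℝ → H := hy.1.mk y with hzdef
  have hzm : StronglyMeasurable z := hy.1.stronglyMeasurable_mk
  have hyz : y =ᵐ[volume.restrict (Set.Icc 0 T)] z := hy.1.ae_eq_mk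
  have hz : MemLp z 2 (volume.restrict (Set.Icc 0 T)) := hy.ae_eq hyz
  -- the bad set where `y ≠ z` (inside `[0,T]`, or after translation by `ε`)
  set B : Set ℝ := ({x | y x ≠ z x} ∩ Set.Icc 0 T) ∪
    ((· + ε) ⁻¹' ({x | y x ≠ z x} ∩ Set.Icc 0 T)) with hBdef
  have hB0 : volume B = 0 := by
    have h1 : volume ({x | y x ≠ z x} ∩ Set.Icc 0 T) = 0 := by
      have h := hyz
      rw [EventuallyEq, ae_iff, Measure.restrict_apply' measurableSet_Icc] at h
      exact h
    exact measure_union_null h1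
      ((measurePreserving_add_right volume ε).quasiMeasurePreserving.preimage_null h1)
  have hkey : ∀ t, t ∈ Set.Ioc 0 T' → t ∉ B → y (t + ε) - y t = z (t + ε) - z t := by
    intro t ht hB
    have h1 : y t = z t := by
      by_contra hne
      exact hB (Or.inl ⟨hne, le_of_lt ht.1, le_trans ht.2 (le_of_lt hT'T)⟩)
    have h2 : y (t + ε) = z (t + ε) := by
      by_contra hne
      refine hB (Or.inr ?_)
      exact ⟨hne, by show (0:ℝ) ≤ t + ε; linarith [ht.1], by show t + ε ≤ T; linarith [ht.2]⟩
    rw [h1, h2]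
  have hcongr : ∀ s : Set ℝ, MeasurableSet s → s ⊆ Set.Ioc 0 T' →
      (fun t => y (t + ε) - y t) =ᵐ[volume.restrict s] fun t => z (t + ε) - z t := by
    intro s hs hsub
    rw [EventuallyEq, ae_iff, Measure.restrict_apply' hs]
    refine measure_mono_null ?_ hB0
    rintro t ⟨hne, hts⟩
    by_contra hB
    exact hne (hkey t (hsub hts) hB)
  -- the difference function
  set g : ℝ → H := fun t => z (t + ε) - z t with hgdef
  have hgm : StronglyMeasurable g := (hzm.comp_measurable (measurable_add_const ε)).sub hzm
  have hgn : Measurable fun t => (‖g t‖₊ : ℝ≥0∞) := hgm.enorm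
  have hsub2 : ∀ s : ℝ, Set.Ioc (max (s - ε) 0) (min s T') ⊆ Set.Ioc 0 T' := fun s t ht =>
    ⟨lt_of_le_of_lt (le_max_right _ _) ht.1, le_trans ht.2 (min_le_right _ _)⟩
  -- rewriting the three integrals with `z` resp. `g`
  have hLHS : (∫ s in (0:ℝ)..T,
        ‖(1 / ε) • ∫ t in Set.Ioc (max (s - ε) 0) (min s T'), (y (t + ε) - y t)‖ ^ 2)
      = ∫ s in Set.Ioc (0:ℝ) T,
        ‖(1 / ε) • ∫ t in Set.Ioc (max (s - ε) 0) (min s T'), g t‖ ^ 2 := by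
    rw [intervalIntegral.integral_of_le hT]
    refine integral_congr_ae (Filter.Eventually.of_forall fun s => ?_)
    exact congrArg (fun v => ‖(1 / ε) • v‖ ^ 2)
      (integral_congr_ae (hcongr _ measurableSet_Ioc (hsub2 s)))
  have hRHS1 : (∫ t in (0:ℝ)..T', ‖y (t + ε) - y t‖ ^ 2)
      = ∫ t in Set.Ioc (0:ℝ) T', ‖g t‖ ^ 2 := by
    rw [intervalIntegral.integral_of_le hT']
    refine integral_congr_ae ?_
    filter_upwards [hcongr _ measurableSet_Ioc (fun t ht => ht)] with t ht
    rw [ht]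
  have hRHS2 : (∫ t in (0:ℝ)..T, ‖y t‖ ^ 2) = ∫ t in Set.Ioc (0:ℝ) T, ‖z t‖ ^ 2 := by
    rw [intervalIntegral.integral_of_le hT]
    refine integral_congr_ae ?_
    filter_upwards [ae_restrict_of_ae_restrict_of_subset Set.Ioc_subset_Icc_self hyz] with t ht
    rw [ht]
  -- integrability facts
  have hw : IntegrableOn (fun t => ‖z t‖ ^ 2) (Set.Icc 0 T) volume := by
    have h := hz.integrable_norm_rpow (by norm_num) (by norm_num)
    refine h.congr (Filter.Eventually.of_forall fun t => ?_)
    have h2 : ((2 : ℝ≥0∞)).toReal = ((2:ℕ):ℝ) := by norm_num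
    simp only [h2, Real.rpow_natCast]
  have hwIocT : IntegrableOn (fun t => ‖z t‖ ^ 2) (Set.Ioc 0 T) volume :=
    hw.mono_set Set.Ioc_subset_Icc_self
  have hwIocT' : IntegrableOn (fun t => ‖z t‖ ^ 2) (Set.Ioc 0 T') volume :=
    hw.mono_set fun x hx => ⟨le_of_lt hx.1, le_trans hx.2 (le_of_lt hT'T)⟩
  have hwShiftSet : IntegrableOn (fun t => ‖z t‖ ^ 2) (Set.Ioc ε (T' + ε)) volume :=
    hw.mono_set fun x hx => ⟨le_of_lt (lt_of_le_of_lt hε.le hx.1), le_trans hx.2 hT'e⟩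
  have hpre : ((fun x : ℝ => x + ε) ⁻¹' Set.Ioc ε (T' + ε)) = Set.Ioc 0 T' := by
    ext t
    simp only [Set.mem_preimage, Set.mem_Ioc]
    constructor <;> rintro ⟨h1, h2⟩ <;> exact ⟨by linarith, by linarith⟩
  have hwshift : IntegrableOn (fun t => ‖z (t + ε)‖ ^ 2) (Set.Ioc 0 T') volume := by
    have hmp : MeasurePreserving (fun x : ℝ => x + ε)
        (volume.restrict (Set.Ioc 0 T')) (volume.restrict (Set.Ioc ε (T' + ε))) := by
      have h := (measurePreserving_add_right volume ε).restrict_preimage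
        (measurableSet_Ioc (a := ε) (b := T' + ε))
      rwa [hpre] at h
    have h3 : Integrable ((fun t => ‖z t‖ ^ 2) ∘ fun x : ℝ => x + ε)
        (volume.restrict (Set.Ioc 0 T')) :=
      (MeasurePreserving.integrable_comp_emb (g := fun t => ‖z t‖ ^ 2) hmp
        (measurableEmbedding_addRight ε)).2 hwShiftSet
    exact h3.congr (Filter.Eventually.of_forall fun t => rfl)
  have hshift_eq : (∫ t in Set.Ioc (0:ℝ) T', ‖z (t + ε)‖ ^ 2)
      = ∫ t in Set.Ioc ε (T' + ε), ‖z t‖ ^ 2 := by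
    rw [← hpre]
    exact (measurePreserving_add_right volume ε).setIntegral_preimage_emb
      (measurableEmbedding_addRight ε) (fun u => ‖z u‖ ^ 2) (Set.Ioc ε (T' + ε))
  have hgsq_int : IntegrableOn (fun t => ‖g t‖ ^ 2) (Set.Ioc 0 T') volume := by
    have hb : Integrable (fun t => 2 * ‖z (t + ε)‖ ^ 2 + 2 * ‖z t‖ ^ 2)
        (volume.restrict (Set.Ioc 0 T')) := (hwshift.const_mul 2).add (hwIocT'.const_mul 2)
    refine hb.mono' ((hgm.norm.measurable.pow_const 2).aestronglyMeasurable)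
      (Filter.Eventually.of_forall fun t => ?_)
    rw [Real.norm_eq_abs, abs_of_nonneg (sq_nonneg _)]
    have h1 : ‖g t‖ ≤ ‖z (t + ε)‖ + ‖z t‖ := norm_sub_le _ _
    have h2 : ‖g t‖ ^ 2 ≤ (‖z (t + ε)‖ + ‖z t‖) ^ 2 :=
      pow_le_pow_left₀ (norm_nonneg _) h1 2
    nlinarith [sq_nonneg (‖z (t + ε)‖ - ‖z t‖)]
  -- Part 2
  have hpart2 : (∫ t in Set.Ioc (0:ℝ) T', ‖g t‖ ^ 2)
      ≤ 4 * ∫ t in Set.Ioc (0:ℝ) T, ‖z t‖ ^ 2 := by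
    have h1 : (∫ t in Set.Ioc (0:ℝ) T', ‖g t‖ ^ 2)
        ≤ ∫ t in Set.Ioc (0:ℝ) T', (2 * ‖z (t + ε)‖ ^ 2 + 2 * ‖z t‖ ^ 2) := by
      refine integral_mono hgsq_int ((hwshift.const_mul 2).add (hwIocT'.const_mul 2)) fun t => ?_
      have h1 : ‖g t‖ ≤ ‖z (t + ε)‖ + ‖z t‖ := norm_sub_le _ _
      have h2 : ‖g t‖ ^ 2 ≤ (‖z (t + ε)‖ + ‖z t‖) ^ 2 :=
        pow_le_pow_left₀ (norm_nonneg _) h1 2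
      simp only
      nlinarith [sq_nonneg (‖z (t + ε)‖ - ‖z t‖)]
    have h2 : (∫ t in Set.Ioc (0:ℝ) T', (2 * ‖z (t + ε)‖ ^ 2 + 2 * ‖z t‖ ^ 2))
        = 2 * (∫ t in Set.Ioc (0:ℝ) T', ‖z (t + ε)‖ ^ 2)
          + 2 * ∫ t in Set.Ioc (0:ℝ) T', ‖z t‖ ^ 2 := by
      rw [integral_add (hwshift.const_mul 2) (hwIocT'.const_mul 2),
        integral_const_mul, integral_const_mul]
    have h3 : (∫ t in Set.Ioc (0:ℝ) T', ‖z (t + ε)‖ ^ 2)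
        ≤ ∫ t in Set.Ioc (0:ℝ) T, ‖z t‖ ^ 2 := by
      rw [hshift_eq]
      refine setIntegral_mono_set hwIocT (Filter.Eventually.of_forall fun t => sq_nonneg _)
        (HasSubset.Subset.eventuallyLE fun x hx =>
          ⟨lt_of_le_of_lt hε.le hx.1, le_trans hx.2 hT'e⟩)
    have h4 : (∫ t in Set.Ioc (0:ℝ) T', ‖z t‖ ^ 2)
        ≤ ∫ t in Set.Ioc (0:ℝ) T, ‖z t‖ ^ 2 :=
      setIntegral_mono_set hwIocT (Filter.Eventually.of_forall fun t => sq_nonneg _)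
        (HasSubset.Subset.eventuallyLE fun x hx => ⟨hx.1, le_trans hx.2 (le_of_lt hT'T)⟩)
    linarith
  -- Part 1: pointwise Cauchy–Schwarz bound
  have hpt : ∀ s : ℝ,
      ENNReal.ofReal (‖(1 / ε) • ∫ t in Set.Ioc (max (s - ε) 0) (min s T'), g t‖ ^ 2)
      ≤ ENNReal.ofReal (1 / ε)
        * ∫⁻ t in Set.Ioc (max (s - ε) 0) (min s T'), (‖g t‖₊ : ℝ≥0∞) ^ 2 := by
    intro s
    have hvol : volume (Set.Ioc (max (s - ε) 0) (min s T')) ≤ ENNReal.ofReal ε := by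
      rw [Real.volume_Ioc]
      refine ENNReal.ofReal_le_ofReal ?_
      have h1 : min s T' ≤ s := min_le_left _ _
      have h2 : s - ε ≤ max (s - ε) 0 := le_max_left _ _
      linarith
    have h1 : (‖∫ t in Set.Ioc (max (s - ε) 0) (min s T'), g t‖₊ : ℝ≥0∞)
        ≤ ∫⁻ t in Set.Ioc (max (s - ε) 0) (min s T'), (‖g t‖₊ : ℝ≥0∞) :=
      enorm_integral_le_lintegral_enorm _
    have h2 : (∫⁻ t in Set.Ioc (max (s - ε) 0) (min s T'), (‖g t‖₊ : ℝ≥0∞)) ^ 2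
        ≤ volume (Set.Ioc (max (s - ε) 0) (min s T'))
          * ∫⁻ t in Set.Ioc (max (s - ε) 0) (min s T'), (‖g t‖₊ : ℝ≥0∞) ^ 2 := by
      have h := cs_lintegral (volume.restrict (Set.Ioc (max (s - ε) 0) (min s T')))
        hgn.aemeasurable
      rwa [Measure.restrict_apply_univ] at h
    calc ENNReal.ofReal (‖(1 / ε) • ∫ t in Set.Ioc (max (s - ε) 0) (min s T'), g t‖ ^ 2)
        = ENNReal.ofReal ((1 / ε) ^ 2
            * ‖∫ t in Set.Ioc (max (s - ε) 0) (min s T'), g t‖ ^ 2) := by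
          rw [norm_smul, mul_pow, Real.norm_eq_abs, abs_of_pos (by positivity)]
      _ = ENNReal.ofReal ((1 / ε) ^ 2)
            * (‖∫ t in Set.Ioc (max (s - ε) 0) (min s T'), g t‖₊ : ℝ≥0∞) ^ 2 := by
          rw [ENNReal.ofReal_mul (by positivity), ← enorm_eq_nnnorm, ← ofReal_norm,
            ← ENNReal.ofReal_pow (norm_nonneg _)]
      _ ≤ ENNReal.ofReal ((1 / ε) ^ 2)
            * (volume (Set.Ioc (max (s - ε) 0) (min s T'))
              * ∫⁻ t in Set.Ioc (max (s - ε) 0) (min s T'), (‖g t‖₊ : ℝ≥0∞) ^ 2) := by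
          gcongr
          exact le_trans (pow_le_pow_left' h1 2) h2
      _ ≤ ENNReal.ofReal ((1 / ε) ^ 2)
            * (ENNReal.ofReal ε
              * ∫⁻ t in Set.Ioc (max (s - ε) 0) (min s T'), (‖g t‖₊ : ℝ≥0∞) ^ 2) := by
          gcongr
      _ = ENNReal.ofReal (1 / ε)
            * ∫⁻ t in Set.Ioc (max (s - ε) 0) (min s T'), (‖g t‖₊ : ℝ≥0∞) ^ 2 := by
          rw [← mul_assoc, ← ENNReal.ofReal_mul (by positivity)]
          congr 2
          field_simp
  -- Fubini–Tonelli
  have hSm : MeasurableSet {p : ℝ × ℝ | max (p.1 - ε) 0 < p.2 ∧ p.2 ≤ min p.1 T'} :=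
    MeasurableSet.inter
      (measurableSet_lt ((measurable_fst.sub measurable_const).max measurable_const)
        measurable_snd)
      (measurableSet_le measurable_snd (measurable_fst.min measurable_const))
  set K : ℝ × ℝ → ℝ≥0∞ := fun p =>
    Set.indicator {p : ℝ × ℝ | max (p.1 - ε) 0 < p.2 ∧ p.2 ≤ min p.1 T'}
      (fun q => (‖g q.2‖₊ : ℝ≥0∞) ^ 2) p with hKdef
  have hKm : Measurable K :=
    (((hgn.pow_const 2).comp measurable_snd).indicator hSm)
  have hT1 : ∀ s : ℝ,
      (∫⁻ t in Set.Ioc (max (s - ε) 0) (min s T'), (‖g t‖₊ : ℝ≥0∞) ^ 2) = ∫⁻ t, K (s, t) := by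
    intro s
    rw [← lintegral_indicator measurableSet_Ioc]
    refine lintegral_congr fun t => ?_
    simp only [hKdef, Set.indicator_apply, Set.mem_Ioc, Set.mem_setOf_eq]
  have hT2 : (∫⁻ s in Set.Ioc (0:ℝ) T, ∫⁻ t, K (s, t))
      = ∫⁻ t, ∫⁻ s in Set.Ioc (0:ℝ) T, K (s, t) := by
    refine lintegral_lintegral_swap ?_
    exact hKm.aemeasurable
  have hT3 : ∀ t : ℝ, (∫⁻ s in Set.Ioc (0:ℝ) T, K (s, t))
      = Set.indicator (Set.Ioc (0:ℝ) T')
        (fun u => ENNReal.ofReal ε * (‖g u‖₊ : ℝ≥0∞) ^ 2) t := by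
    intro t
    by_cases ht : t ∈ Set.Ioc (0:ℝ) T'
    · have hKt : ∀ s, K (s, t)
          = Set.indicator (Set.Ico t (t + ε)) (fun _ => (‖g t‖₊ : ℝ≥0∞) ^ 2) s := by
        intro s
        simp only [hKdef, Set.indicator_apply, Set.mem_setOf_eq, Set.mem_Ico,
          max_lt_iff, le_min_iff]
        refine if_congr ?_ rfl rfl
        constructor
        · rintro ⟨⟨ha, hb⟩, hc, hd⟩
          exact ⟨hc, by linarith⟩
        · rintro ⟨hc, ha⟩
          exact ⟨⟨by linarith, ht.1⟩, hc, ht.2⟩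
      have hsubI : Set.Ico t (t + ε) ∩ Set.Ioc (0:ℝ) T = Set.Ico t (t + ε) := by
        refine Set.inter_eq_self_of_subset_left fun x hx => ?_
        exact ⟨lt_of_lt_of_le ht.1 hx.1, by linarith [hx.2, ht.2]⟩
      rw [Set.indicator_of_mem ht]
      calc (∫⁻ s in Set.Ioc (0:ℝ) T, K (s, t))
          = ∫⁻ s in Set.Ioc (0:ℝ) T,
              Set.indicator (Set.Ico t (t + ε)) (fun _ => (‖g t‖₊ : ℝ≥0∞) ^ 2) s :=
            lintegral_congr fun s => hKt s
        _ = ∫⁻ _ in Set.Ico t (t + ε), (‖g t‖₊ : ℝ≥0∞) ^ 2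
              ∂(volume.restrict (Set.Ioc (0:ℝ) T)) :=
            lintegral_indicator measurableSet_Ico _
        _ = ENNReal.ofReal ε * (‖g t‖₊ : ℝ≥0∞) ^ 2 := by
            rw [setLIntegral_const, Measure.restrict_apply measurableSet_Ico, hsubI,
              Real.volume_Ico, add_sub_cancel_left, mul_comm]
    · rw [Set.indicator_of_notMem ht]
      have hKt : ∀ s, K (s, t) = 0 := by
        intro s
        simp only [hKdef, Set.indicator_apply, Set.mem_setOf_eq]
        rw [if_neg]
        rintro ⟨h1, h2⟩
        exact ht ⟨lt_of_le_of_lt (le_max_right _ _) h1, le_trans h2 (min_le_right _ _)⟩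
      simp [hKt]
  have hT4 : (∫⁻ t, Set.indicator (Set.Ioc (0:ℝ) T')
        (fun u => ENNReal.ofReal ε * (‖g u‖₊ : ℝ≥0∞) ^ 2) t)
      = ENNReal.ofReal ε * ∫⁻ t in Set.Ioc (0:ℝ) T', (‖g t‖₊ : ℝ≥0∞) ^ 2 := by
    rw [lintegral_indicator measurableSet_Ioc]
    exact lintegral_const_mul' _ _ ENNReal.ofReal_ne_top
  -- identify the `lintegral` on the right with the Bochner integral
  have hL2 : (∫⁻ t in Set.Ioc (0:ℝ) T', (‖g t‖₊ : ℝ≥0∞) ^ 2)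
      = ENNReal.ofReal (∫ t in Set.Ioc (0:ℝ) T', ‖g t‖ ^ 2) := by
    rw [ofReal_integral_eq_lintegral_ofReal hgsq_int
      (Filter.Eventually.of_forall fun t => sq_nonneg _)]
    refine lintegral_congr fun t => ?_
    rw [← enorm_eq_nnnorm, ← ofReal_norm, ← ENNReal.ofReal_pow (norm_nonneg _)]
  have hL2top : (∫⁻ t in Set.Ioc (0:ℝ) T', (‖g t‖₊ : ℝ≥0∞) ^ 2) ≠ ⊤ := by
    rw [hL2]; exact ENNReal.ofReal_ne_top
  -- the main chain of inequalities
  have hchain : (∫⁻ s in Set.Ioc (0:ℝ) T,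
        ENNReal.ofReal (‖(1 / ε) • ∫ t in Set.Ioc (max (s - ε) 0) (min s T'), g t‖ ^ 2))
      ≤ ∫⁻ t in Set.Ioc (0:ℝ) T', (‖g t‖₊ : ℝ≥0∞) ^ 2 := by
    calc (∫⁻ s in Set.Ioc (0:ℝ) T,
          ENNReal.ofReal (‖(1 / ε) • ∫ t in Set.Ioc (max (s - ε) 0) (min s T'), g t‖ ^ 2))
        ≤ ∫⁻ s in Set.Ioc (0:ℝ) T, ENNReal.ofReal (1 / ε)
            * ∫⁻ t in Set.Ioc (max (s - ε) 0) (min s T'), (‖g t‖₊ : ℝ≥0∞) ^ 2 :=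
          lintegral_mono fun s => hpt s
      _ = ENNReal.ofReal (1 / ε) * ∫⁻ s in Set.Ioc (0:ℝ) T,
            ∫⁻ t in Set.Ioc (max (s - ε) 0) (min s T'), (‖g t‖₊ : ℝ≥0∞) ^ 2 :=
          lintegral_const_mul' _ _ ENNReal.ofReal_ne_top
      _ = ENNReal.ofReal (1 / ε)
            * (ENNReal.ofReal ε * ∫⁻ t in Set.Ioc (0:ℝ) T', (‖g t‖₊ : ℝ≥0∞) ^ 2) := by
          congr 1
          calc (∫⁻ s in Set.Ioc (0:ℝ) T,
                ∫⁻ t in Set.Ioc (max (s - ε) 0) (min s T'), (‖g t‖₊ : ℝ≥0∞) ^ 2)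
              = ∫⁻ s in Set.Ioc (0:ℝ) T, ∫⁻ t, K (s, t) := lintegral_congr fun s => hT1 s
            _ = ∫⁻ t, ∫⁻ s in Set.Ioc (0:ℝ) T, K (s, t) := hT2
            _ = ∫⁻ t, Set.indicator (Set.Ioc (0:ℝ) T')
                  (fun u => ENNReal.ofReal ε * (‖g u‖₊ : ℝ≥0∞) ^ 2) t :=
                lintegral_congr fun t => hT3 t
            _ = ENNReal.ofReal ε * ∫⁻ t in Set.Ioc (0:ℝ) T', (‖g t‖₊ : ℝ≥0∞) ^ 2 := hT4
      _ = ∫⁻ t in Set.Ioc (0:ℝ) T', (‖g t‖₊ : ℝ≥0∞) ^ 2 := by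
          rw [← mul_assoc, ← ENNReal.ofReal_mul (by positivity), one_div,
            inv_mul_cancel₀ hε.ne', ENNReal.ofReal_one, one_mul]
  -- conclude Part 1
  have hpart1 : (∫ s in Set.Ioc (0:ℝ) T,
        ‖(1 / ε) • ∫ t in Set.Ioc (max (s - ε) 0) (min s T'), g t‖ ^ 2)
      ≤ ∫ t in Set.Ioc (0:ℝ) T', ‖g t‖ ^ 2 := by
    by_cases hint : Integrable
        (fun s => ‖(1 / ε) • ∫ t in Set.Ioc (max (s - ε) 0) (min s T'), g t‖ ^ 2)
        (volume.restrict (Set.Ioc (0:ℝ) T))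
    · rw [integral_eq_lintegral_of_nonneg_ae
        (Filter.Eventually.of_forall fun s => sq_nonneg _) hint.aestronglyMeasurable]
      have h := ENNReal.toReal_mono hL2top hchain
      rwa [hL2, ENNReal.toReal_ofReal (integral_nonneg fun t => sq_nonneg _)] at h
    · rw [integral_undef hint]
      exact integral_nonneg fun t => sq_nonneg _
  exact ⟨by rw [hLHS, hRHS1]; exact hpart1, by rw [hRHS1, hRHS2]; exact hpart2⟩
end

section
/- Let H be a separable Hilbert space and fix 0 ≤ T' < T. For every y ∈ L²([0,T]; H), T^ε(y) → 0 in L²([0,T]; H) as ε → 0⁺, i.e. lim_{ε→0⁺} ∫_0^T ‖T^ε(y)_s‖²_H ds = 0. -/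
open MeasureTheory Filter Set
open scoped ENNReal NNReal Topology

/-- Cauchy–Schwarz for `lintegral`: `(∫⁻ f)² ≤ (∫⁻ f²) * μ univ`. -/
lemma sq_lintegral_le_aux {α : Type*} [MeasurableSpace α] (μ : Measure α)
    {f : α → ℝ≥0∞} (hf : AEMeasurable f μ) :
    (∫⁻ a, f a ∂μ) ^ 2 ≤ (∫⁻ a, f a ^ 2 ∂μ) * μ Set.univ := by
  have hpq : Real.HolderConjugate 2 2 := Real.holderConjugate_iff.mpr ⟨one_lt_two, by norm_num⟩
  have h := ENNReal.lintegral_mul_le_Lp_mul_Lq μ hpq hf (aemeasurable_const (b := (1:ℝ≥0∞)))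
  simp only [Pi.mul_apply, Pi.one_apply, mul_one, ENNReal.one_rpow, lintegral_const,
    one_mul] at h
  have h2 : (∫⁻ a, f a ∂μ) ^ 2 ≤
      ((∫⁻ a, f a ^ (2:ℝ) ∂μ) ^ (1 / (2:ℝ)) * (μ Set.univ) ^ (1 / (2:ℝ))) ^ 2 :=
    pow_le_pow_left' h 2
  calc (∫⁻ a, f a ∂μ) ^ 2
      ≤ ((∫⁻ a, f a ^ (2:ℝ) ∂μ) ^ (1 / (2:ℝ)) * (μ Set.univ) ^ (1 / (2:ℝ))) ^ 2 := h2
    _ = (∫⁻ a, f a ^ (2:ℝ) ∂μ) * μ Set.univ := by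
        rw [mul_pow, ← ENNReal.rpow_natCast (_ ^ (1 / (2:ℝ))) 2,
          ← ENNReal.rpow_natCast ((μ Set.univ) ^ (1 / (2:ℝ))) 2,
          ← ENNReal.rpow_mul, ← ENNReal.rpow_mul]
        norm_num
    _ = (∫⁻ a, f a ^ 2 ∂μ) * μ Set.univ := by
        congr 1
        refine lintegral_congr fun a => ?_
        rw [← ENNReal.rpow_natCast (f a) 2]
        norm_num

lemma Teps_key_bound {H : Type*} [NormedAddCommGroup H] [NormedSpace ℝ H]
    (T T' ε : ℝ) (hT' : 0 ≤ T') (hT'T : T' < T) (hε : 0 < ε) (hεT : ε ≤ T - T')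
    (y : ℝ → H)
    (hzm : AEStronglyMeasurable ((Set.Icc (0:ℝ) T).indicator y) volume)
    (hL : (∫⁻ t, (ENNReal.ofReal
        ‖(Set.Icc (0:ℝ) T).indicator y (t + ε) - (Set.Icc (0:ℝ) T).indicator y t‖) ^ 2) ≠ ⊤) :
    (∫ s in (0:ℝ)..T,
        ‖(1 / ε) • ∫ t in Set.Ioc (max (s - ε) 0) (min s T'), (y (t + ε) - y t)‖ ^ 2)
      ≤ (∫⁻ t, (ENNReal.ofReal
        ‖(Set.Icc (0:ℝ) T).indicator y (t + ε) - (Set.Icc (0:ℝ) T).indicator y t‖) ^ 2).toReal := by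
  set z : ℝ → H := (Set.Icc (0:ℝ) T).indicator y with hzdef
  set W : ℝ → ℝ≥0∞ := fun t => ENNReal.ofReal ‖z (t + ε) - z t‖ with hWdef
  set εe : ℝ≥0∞ := ENNReal.ofReal ε with hεedef
  have hεe0 : εe ≠ 0 := by
    rw [hεedef]; exact (ENNReal.ofReal_pos.mpr hε).ne'
  have hεetop : εe ≠ ⊤ := ENNReal.ofReal_ne_top
  have hT : (0:ℝ) ≤ T := hT'.trans hT'T.le
  have hWm : AEMeasurable W volume := by
    have h1 : AEStronglyMeasurable (fun t => z (t + ε)) volume :=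
      hzm.comp_measurePreserving (measurePreserving_add_right volume ε)
    exact ((h1.sub hzm).norm.aemeasurable).ennreal_ofReal
  -- Step 1: pointwise bound in `ℝ≥0∞`
  have step1 : ∀ s : ℝ,
      ENNReal.ofReal (‖(1 / ε) • ∫ t in Set.Ioc (max (s - ε) 0) (min s T'), (y (t + ε) - y t)‖ ^ 2)
      ≤ εe⁻¹ * ∫⁻ t in Set.Ioc (max (s - ε) 0) (min s T'), W t ^ 2 := by
    intro s
    have hcong : (∫ t in Set.Ioc (max (s - ε) 0) (min s T'), (y (t + ε) - y t))
        = ∫ t in Set.Ioc (max (s - ε) 0) (min s T'), (z (t + ε) - z t) := by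
      refine setIntegral_congr_fun measurableSet_Ioc fun t ht => ?_
      have h0t : (0:ℝ) < t := lt_of_le_of_lt (le_max_right _ _) ht.1
      have htT' : t ≤ T' := ht.2.trans (min_le_right _ _)
      have h1 : z t = y t := by
        rw [hzdef]
        exact Set.indicator_of_mem (show t ∈ Set.Icc (0:ℝ) T from ⟨h0t.le, htT'.trans hT'T.le⟩) y
      have h2 : z (t + ε) = y (t + ε) := by
        rw [hzdef]
        exact Set.indicator_of_mem (show t + ε ∈ Set.Icc (0:ℝ) T from ⟨by positivity, by linarith⟩) y
      rw [h1, h2]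
    have hnorm : ‖∫ t in Set.Ioc (max (s - ε) 0) (min s T'), (z (t + ε) - z t)‖
        ≤ (∫⁻ t in Set.Ioc (max (s - ε) 0) (min s T'), W t).toReal :=
      norm_integral_le_lintegral_norm _
    have hofReal : ENNReal.ofReal ‖∫ t in Set.Ioc (max (s - ε) 0) (min s T'), (z (t + ε) - z t)‖
        ≤ ∫⁻ t in Set.Ioc (max (s - ε) 0) (min s T'), W t :=
      ENNReal.ofReal_le_of_le_toReal hnorm
    have hCS : (∫⁻ t in Set.Ioc (max (s - ε) 0) (min s T'), W t) ^ 2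
        ≤ (∫⁻ t in Set.Ioc (max (s - ε) 0) (min s T'), W t ^ 2)
            * volume (Set.Ioc (max (s - ε) 0) (min s T')) := by
      simpa [Measure.restrict_apply_univ] using
        sq_lintegral_le_aux (volume.restrict (Set.Ioc (max (s - ε) 0) (min s T'))) hWm.restrict
    have hvol : volume (Set.Ioc (max (s - ε) 0) (min s T')) ≤ εe := by
      rw [Real.volume_Ioc]
      refine ENNReal.ofReal_le_ofReal ?_
      have h1 := le_max_left (s - ε) (0:ℝ)
      have h2 := min_le_left s T'
      linarith
    calc ENNReal.ofReal (‖(1 / ε) • ∫ t in Set.Ioc (max (s - ε) 0) (min s T'), (y (t + ε) - y t)‖ ^ 2)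
        = (ENNReal.ofReal ‖(1 / ε) • ∫ t in Set.Ioc (max (s - ε) 0) (min s T'), (y (t + ε) - y t)‖) ^ 2 := by
          rw [← ENNReal.ofReal_pow (norm_nonneg _)]
      _ = (ENNReal.ofReal (1 / ε)
            * ENNReal.ofReal ‖∫ t in Set.Ioc (max (s - ε) 0) (min s T'), (z (t + ε) - z t)‖) ^ 2 := by
          rw [hcong, norm_smul, Real.norm_of_nonneg (by positivity),
            ENNReal.ofReal_mul (by positivity)]
      _ = εe⁻¹ ^ 2
            * (ENNReal.ofReal ‖∫ t in Set.Ioc (max (s - ε) 0) (min s T'), (z (t + ε) - z t)‖) ^ 2 := by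
          rw [one_div, hεedef, ENNReal.ofReal_inv_of_pos hε, mul_pow]
      _ ≤ εe⁻¹ ^ 2 * ((∫⁻ t in Set.Ioc (max (s - ε) 0) (min s T'), W t ^ 2) * εe) := by
          gcongr εe⁻¹ ^ 2 * ?_
          refine le_trans ?_ (hCS.trans (by gcongr))
          gcongr
      _ = εe⁻¹ * ∫⁻ t in Set.Ioc (max (s - ε) 0) (min s T'), W t ^ 2 := by
          have : εe⁻¹ ^ 2 * ((∫⁻ t in Set.Ioc (max (s - ε) 0) (min s T'), W t ^ 2) * εe)
              = (εe⁻¹ * (εe⁻¹ * εe)) * ∫⁻ t in Set.Ioc (max (s - ε) 0) (min s T'), W t ^ 2 := by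
            ring
          rw [this, ENNReal.inv_mul_cancel hεe0 hεetop, mul_one]
  -- Step 2: Tonelli
  set A : Set (ℝ × ℝ) := {p : ℝ × ℝ | max (p.1 - ε) 0 < p.2 ∧ p.2 ≤ min p.1 T'} with hAdef
  have hAm : MeasurableSet A := by
    have h1 : MeasurableSet {p : ℝ × ℝ | max (p.1 - ε) 0 < p.2} :=
      measurableSet_lt (by fun_prop) measurable_snd
    have h2 : MeasurableSet {p : ℝ × ℝ | p.2 ≤ min p.1 T'} :=
      measurableSet_le measurable_snd (by fun_prop)
    exact h1.inter h2
  have hswap : (∫⁻ s in Set.Ioc (0:ℝ) T, ∫⁻ t in Set.Ioc (max (s - ε) 0) (min s T'), W t ^ 2)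
      = ∫⁻ t, ∫⁻ s in Set.Ioc (0:ℝ) T, A.indicator (fun p => W p.2 ^ 2) (s, t) := by
    have hK : AEMeasurable (Function.uncurry fun s t => A.indicator (fun p : ℝ × ℝ => W p.2 ^ 2) (s, t))
        ((volume.restrict (Set.Ioc (0:ℝ) T)).prod volume) := by
      have h2 : AEMeasurable (fun p : ℝ × ℝ => W p.2 ^ 2)
          ((volume.restrict (Set.Ioc (0:ℝ) T)).prod volume) := (hWm.pow_const 2).comp_snd
      exact h2.indicator hAm
    have h := lintegral_lintegral_swap hK
    rw [← h]
    refine lintegral_congr fun s => ?_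
    rw [← lintegral_indicator measurableSet_Ioc]
    refine lintegral_congr fun t => ?_
    by_cases ht : t ∈ Set.Ioc (max (s - ε) 0) (min s T')
    · rw [Set.indicator_of_mem ht, Set.indicator_of_mem]
      rw [Set.mem_Ioc] at ht
      exact ht
    · rw [Set.indicator_of_notMem ht, Set.indicator_of_notMem]
      rw [Set.mem_Ioc] at ht
      exact ht
  have hinner : ∀ t : ℝ, (∫⁻ s in Set.Ioc (0:ℝ) T, A.indicator (fun p => W p.2 ^ 2) (s, t))
      ≤ εe * W t ^ 2 := by
    intro t
    have hSm : MeasurableSet {s : ℝ | (s, t) ∈ A} := by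
      have h1 : MeasurableSet {s : ℝ | max (s - ε) 0 < t} :=
        measurableSet_lt (by fun_prop) measurable_const
      have h2 : MeasurableSet {s : ℝ | t ≤ min s T'} :=
        measurableSet_le measurable_const (by fun_prop)
      exact h1.inter h2
    have hsub : {s : ℝ | (s, t) ∈ A} ⊆ Set.Ico t (t + ε) := by
      intro s hs
      obtain ⟨h1, h2⟩ := hs
      refine ⟨(le_min_iff.mp h2).1, ?_⟩
      have h3 := (max_lt_iff.mp h1).1
      linarith
    calc (∫⁻ s in Set.Ioc (0:ℝ) T, A.indicator (fun p => W p.2 ^ 2) (s, t))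
        = ∫⁻ s in Set.Ioc (0:ℝ) T, {s : ℝ | (s, t) ∈ A}.indicator (fun _ => W t ^ 2) s := by
          refine lintegral_congr fun s => ?_
          by_cases hs : (s, t) ∈ A
          · rw [Set.indicator_of_mem hs,
              Set.indicator_of_mem (show s ∈ {s : ℝ | (s, t) ∈ A} from hs)]
          · rw [Set.indicator_of_notMem hs,
              Set.indicator_of_notMem (show s ∉ {s : ℝ | (s, t) ∈ A} from hs)]
      _ = W t ^ 2 * (volume.restrict (Set.Ioc (0:ℝ) T)) {s : ℝ | (s, t) ∈ A} :=
          lintegral_indicator_const hSm _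
      _ ≤ W t ^ 2 * εe := by
          gcongr
          calc (volume.restrict (Set.Ioc (0:ℝ) T)) {s : ℝ | (s, t) ∈ A}
              ≤ volume {s : ℝ | (s, t) ∈ A} := Measure.restrict_apply_le _ _
            _ ≤ volume (Set.Ico t (t + ε)) := measure_mono hsub
            _ = εe := by rw [Real.volume_Ico, hεedef]; congr 1; ring
      _ = εe * W t ^ 2 := mul_comm _ _
  -- Step 3: assemble in ℝ≥0∞
  have main : (∫⁻ s in Set.Ioc (0:ℝ) T,
      ENNReal.ofReal (‖(1 / ε) • ∫ t in Set.Ioc (max (s - ε) 0) (min s T'), (y (t + ε) - y t)‖ ^ 2))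
      ≤ ∫⁻ t, W t ^ 2 := by
    calc (∫⁻ s in Set.Ioc (0:ℝ) T,
        ENNReal.ofReal (‖(1 / ε) • ∫ t in Set.Ioc (max (s - ε) 0) (min s T'), (y (t + ε) - y t)‖ ^ 2))
        ≤ ∫⁻ s in Set.Ioc (0:ℝ) T, εe⁻¹ * ∫⁻ t in Set.Ioc (max (s - ε) 0) (min s T'), W t ^ 2 :=
          lintegral_mono fun s => step1 s
      _ = εe⁻¹ * ∫⁻ s in Set.Ioc (0:ℝ) T, ∫⁻ t in Set.Ioc (max (s - ε) 0) (min s T'), W t ^ 2 :=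
          lintegral_const_mul' _ _ (ENNReal.inv_ne_top.mpr hεe0)
      _ = εe⁻¹ * ∫⁻ t, ∫⁻ s in Set.Ioc (0:ℝ) T, A.indicator (fun p => W p.2 ^ 2) (s, t) := by
          rw [hswap]
      _ ≤ εe⁻¹ * ∫⁻ t, εe * W t ^ 2 := by
          gcongr εe⁻¹ * ?_
          exact lintegral_mono hinner
      _ = εe⁻¹ * (εe * ∫⁻ t, W t ^ 2) := by rw [lintegral_const_mul' εe _ hεetop]
      _ = (εe⁻¹ * εe) * ∫⁻ t, W t ^ 2 := by ring
      _ = ∫⁻ t, W t ^ 2 := by rw [ENNReal.inv_mul_cancel hεe0 hεetop, one_mul]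
  -- Step 4: from the Bochner integral to the lintegral
  rw [intervalIntegral.integral_of_le hT]
  calc (∫ s in Set.Ioc (0:ℝ) T,
      ‖(1 / ε) • ∫ t in Set.Ioc (max (s - ε) 0) (min s T'), (y (t + ε) - y t)‖ ^ 2)
      ≤ ‖∫ s in Set.Ioc (0:ℝ) T,
          ‖(1 / ε) • ∫ t in Set.Ioc (max (s - ε) 0) (min s T'), (y (t + ε) - y t)‖ ^ 2‖ := by
        rw [Real.norm_eq_abs]; exact le_abs_self _
    _ ≤ (∫⁻ s in Set.Ioc (0:ℝ) T, ENNReal.ofReal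
          ‖‖(1 / ε) • ∫ t in Set.Ioc (max (s - ε) 0) (min s T'), (y (t + ε) - y t)‖ ^ 2‖).toReal :=
        norm_integral_le_lintegral_norm _
    _ = (∫⁻ s in Set.Ioc (0:ℝ) T, ENNReal.ofReal
          (‖(1 / ε) • ∫ t in Set.Ioc (max (s - ε) 0) (min s T'), (y (t + ε) - y t)‖ ^ 2)).toReal := by
        congr 1
        exact lintegral_congr fun s => by rw [Real.norm_of_nonneg (sq_nonneg _)]
    _ ≤ (∫⁻ t, W t ^ 2).toReal := ENNReal.toReal_mono hL main

/-- For every `y ∈ L²([0,T]; H)`, the functions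
`T^ε(y)_s = (1/ε) ∫_{max(s−ε,0)}^{min(s,T')} (y(t+ε) − y(t)) dt` converge to `0` in
`L²([0,T]; H)` as `ε → 0⁺`. -/
theorem Teps_tendsto_zero
    (H : Type*) [NormedAddCommGroup H] [InnerProductSpace ℝ H] [CompleteSpace H]
    [SecondCountableTopology H]
    (T T' : ℝ) (hT' : 0 ≤ T') (hT'T : T' < T)
    (y : ℝ → H) (hy : MemLp y 2 (volume.restrict (Set.Icc 0 T))) :
    Tendsto (fun ε : ℝ =>
        ∫ s in (0:ℝ)..T,
          ‖(1 / ε) • ∫ t in Set.Ioc (max (s - ε) 0) (min s T'), (y (t + ε) - y t)‖ ^ 2)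
      (nhdsWithin 0 (Set.Ioi 0)) (nhds 0) := by
  have hT : (0:ℝ) ≤ T := hT'.trans hT'T.le
  haveI : Fact ((1:ℝ≥0∞) ≤ 2) := ⟨one_le_two⟩
  set z : ℝ → H := (Set.Icc (0:ℝ) T).indicator y with hzdef
  have hz : MemLp z 2 volume := (memLp_indicator_iff_restrict measurableSet_Icc).mpr hy
  set Z : Lp H 2 (volume : Measure ℝ) := hz.toLp z with hZdef
  let G : C(ℝ, C(ℝ, ℝ)) := ContinuousMap.curry ⟨fun p : ℝ × ℝ => p.2 + p.1, by fun_prop⟩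
  have hGapp : ∀ ε x : ℝ, G ε x = x + ε := fun ε x => rfl
  have hgm : ∀ ε : ℝ, MeasurePreserving (G ε) volume volume := fun ε =>
    measurePreserving_add_right volume ε
  set D : ℝ → Lp H 2 (volume : Measure ℝ) :=
    fun ε => Lp.compMeasurePreserving (G ε) (hgm ε) Z - Z with hDdef
  have hcont : Tendsto (fun ε => Lp.compMeasurePreserving (G ε) (hgm ε) Z) (𝓝[>] (0:ℝ))
      (𝓝 (Lp.compMeasurePreserving (G 0) (hgm 0) Z)) :=
    Tendsto.compMeasurePreservingLp tendsto_const_nhds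
      ((G.continuous.tendsto 0).mono_left nhdsWithin_le_nhds) hgm (hgm 0) (by norm_num)
  have h0 : Lp.compMeasurePreserving (G 0) (hgm 0) Z = Z := by
    apply Lp.ext
    filter_upwards [Lp.coeFn_compMeasurePreserving Z (hgm 0)] with x hx
    rw [hx]
    show (⇑Z) (G 0 x) = (⇑Z) x
    rw [hGapp, add_zero]
  have htend : Tendsto (fun ε => ‖D ε‖) (𝓝[>] (0:ℝ)) (𝓝 0) := by
    have h1 : Tendsto D (𝓝[>] (0:ℝ)) (𝓝 0) := by
      have h2 := hcont.sub (tendsto_const_nhds (x := Z))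
      rw [h0, sub_self] at h2
      exact h2
    simpa using h1.norm
  have hae : ∀ ε : ℝ, (⇑(D ε) : ℝ → H) =ᵐ[volume] fun t => z (t + ε) - z t := by
    intro ε
    have h1 := Lp.coeFn_sub (Lp.compMeasurePreserving (G ε) (hgm ε) Z) Z
    have h2 := Lp.coeFn_compMeasurePreserving Z (hgm ε)
    have h3 : (⇑Z : ℝ → H) =ᵐ[volume] z := hz.coeFn_toLp
    have h4 : (fun x => (⇑Z : ℝ → H) (x + ε)) =ᵐ[volume] (fun x => z (x + ε)) :=
      (measurePreserving_add_right volume ε).quasiMeasurePreserving.ae_eq h3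
    filter_upwards [h1, h2, h3, h4] with x e1 e2 e3 e4
    calc (⇑(D ε) : ℝ → H) x
        = (⇑(Lp.compMeasurePreserving (G ε) (hgm ε) Z) : ℝ → H) x - (⇑Z : ℝ → H) x := e1
      _ = (⇑Z : ℝ → H) (x + ε) - (⇑Z : ℝ → H) x := by
          rw [e2]; show (⇑Z) (G ε x) - _ = _; rw [hGapp]
      _ = z (x + ε) - z x := by rw [e4, e3]
  have hLe : ∀ ε : ℝ, (∫⁻ t, (ENNReal.ofReal ‖z (t + ε) - z t‖) ^ 2)
      = (ENNReal.ofReal ‖D ε‖) ^ 2 := by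
    intro ε
    have h2 : eLpNorm (fun t => z (t + ε) - z t) 2 volume
        = (∫⁻ t, (ENNReal.ofReal ‖z (t + ε) - z t‖) ^ 2) ^ (1 / (2:ℝ)) := by
      rw [eLpNorm_eq_lintegral_rpow_enorm_toReal (by norm_num) (by norm_num)]
      have h2' : ((2:ℝ≥0∞)).toReal = (2:ℝ) := by norm_num
      rw [h2']
      congr 1
      refine lintegral_congr fun t => ?_
      rw [← ofReal_norm, ← ENNReal.rpow_natCast (ENNReal.ofReal _) 2]
      norm_num
    have h3 : eLpNorm (fun t => z (t + ε) - z t) 2 volume = ENNReal.ofReal ‖D ε‖ := by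
      rw [← eLpNorm_congr_ae (hae ε), Lp.norm_def,
        ENNReal.ofReal_toReal (Lp.eLpNorm_ne_top _)]
    have h4 : (∫⁻ t, (ENNReal.ofReal ‖z (t + ε) - z t‖) ^ 2)
        = ((∫⁻ t, (ENNReal.ofReal ‖z (t + ε) - z t‖) ^ 2) ^ (1 / (2:ℝ))) ^ (2:ℕ) := by
      rw [← ENNReal.rpow_natCast (_ ^ (1 / (2:ℝ))) 2, ← ENNReal.rpow_mul]
      norm_num
    rw [h4, ← h2, h3]
  have hub : ∀ᶠ ε in 𝓝[>] (0:ℝ),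
      (∫ s in (0:ℝ)..T,
        ‖(1 / ε) • ∫ t in Set.Ioc (max (s - ε) 0) (min s T'), (y (t + ε) - y t)‖ ^ 2)
        ≤ ‖D ε‖ ^ 2 := by
    filter_upwards [Ioo_mem_nhdsGT_of_mem
      (show (0:ℝ) ∈ Set.Ico 0 (T - T') from ⟨le_refl _, sub_pos.mpr hT'T⟩)] with ε hε
    have hb := Teps_key_bound T T' ε hT' hT'T hε.1 hε.2.le y hz.1
      (by rw [hLe ε]; exact ENNReal.pow_ne_top ENNReal.ofReal_ne_top)
    rw [hLe ε, ENNReal.toReal_pow, ENNReal.toReal_ofReal (norm_nonneg _)] at hb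
    exact hb
  have hlb : ∀ᶠ ε in 𝓝[>] (0:ℝ), 0 ≤
      (∫ s in (0:ℝ)..T,
        ‖(1 / ε) • ∫ t in Set.Ioc (max (s - ε) 0) (min s T'), (y (t + ε) - y t)‖ ^ 2) :=
    .of_forall fun ε => intervalIntegral.integral_nonneg hT fun s _ => sq_nonneg _
  have hub_t : Tendsto (fun ε => ‖D ε‖ ^ 2) (𝓝[>] (0:ℝ)) (𝓝 0) := by
    have := htend.pow 2
    simpa using this
  exact tendsto_of_tendsto_of_tendsto_of_le_of_le' tendsto_const_nhds hub_t hlb hub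
end
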